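/- Let T and T' be two tournaments on a vertex set V with |V| ≥ 6, and let I be an interval of T with |I| ≥ 3 such that T[I] is indecomposable. If T and T' are both {3}-hypomorphic and {−2}-hypomorphic and |V∖I| ≥ 3, then |I⁺_T| = |I⁺_{T'}| and |I⁻_T| = |I⁻_{T'}|. Likewise, if T and T' are {−3}-hypomorphic and |V∖I| ≥ 4, then |I⁺_T| = |I⁺_{T'}| and |I⁻_T| = |I⁻_{T'}|. -/

import Mathlib

/-- A (finite) tournament on a vertex type `V`: for each pair of distinct
vertices exactly one arc. -/
structure Tournament (V : Type*) where
  arc : V → V → Prop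
  irrefl : ∀ x, ¬ arc x x
  total : ∀ x y, x ≠ y → (arc x y ↔ ¬ arc y x)

namespace Tournament

variable {V W : Type*}

/-- The dual tournament, obtained by reversing all arcs. -/
def dual (T : Tournament V) : Tournament V where
  arc x y := T.arc y x
  irrefl x := T.irrefl x
  total x y h := T.total y x (Ne.symm h)

/-- The subtournament induced on a subset `X` of the vertex set. -/
def restrict (T : Tournament V) (X : Set V) : Tournament X where
  arc x y := T.arc x y
  irrefl x := T.irrefl x
  total x y h := T.total x y (fun e => h (Subtype.ext e))

/-- Isomorphism of tournaments: an arc-preserving bijection. -/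
def Iso (T : Tournament V) (T' : Tournament W) : Prop :=
  ∃ e : V ≃ W, ∀ x y, T.arc x y ↔ T'.arc (e x) (e y)

/-- `I` is an interval of `T`: every vertex outside `I` dominates all of `I`
or is dominated by all of `I`. -/
def IsInterval (T : Tournament V) (I : Set V) : Prop :=
  ∀ x ∉ I, (∀ y ∈ I, T.arc x y) ∨ (∀ y ∈ I, T.arc y x)

/-- A tournament is indecomposable if all its intervals are trivial. -/
def Indecomposable (T : Tournament V) : Prop :=
  ∀ I : Set V, T.IsInterval I → I = ∅ ∨ I = Set.univ ∨ ∃ x, I = {x}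

def Decomposable (T : Tournament V) : Prop := ¬ T.Indecomposable

/-- Transitive tournament (a linear order). -/
def Transitive (T : Tournament V) : Prop :=
  ∀ x y z, T.arc x y → T.arc y z → T.arc x z

/-- An almost transitive tournament is obtained from a transitive tournament
with at least 3 vertices by reversing the arc between its two extremal
vertices. -/
def AlmostTransitive [Fintype V] (T : Tournament V) : Prop :=
  3 ≤ Fintype.card V ∧
  ∃ T₀ : Tournament V, T₀.Transitive ∧
    ∃ a b : V, a ≠ b ∧ (∀ y, y ≠ a → T₀.arc a y) ∧ (∀ y, y ≠ b → T₀.arc y b) ∧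
      T.arc b a ∧
      ∀ x y, ¬ ((x = a ∧ y = b) ∨ (x = b ∧ y = a)) → (T.arc x y ↔ T₀.arc x y)

/-- Strong connectedness: a directed path between any two distinct vertices. -/
def StronglyConnected (T : Tournament V) : Prop :=
  ∀ x y : V, x ≠ y → Relation.TransGen T.arc x y

/-- `{k}`-hypomorphy: the induced subtournaments on every `k`-element set of
vertices are isomorphic. -/
def Hypo (T T' : Tournament V) (k : ℕ) : Prop :=
  ∀ X : Set V, X.ncard = k → (T.restrict X).Iso (T'.restrict X)

/-- `{-k}`-hypomorphy, i.e. `{n-k}`-hypomorphy where `n` is the number of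
vertices. -/
def MinusHypo [Fintype V] (T T' : Tournament V) (k : ℕ) : Prop :=
  Hypo T T' (Fintype.card V - k)

/-- Self duality. -/
def SelfDual (T : Tournament V) : Prop := T.Iso T.dual

/-- `{-k}`-self duality: removing any `k` vertices yields a self dual
tournament. -/
def MinusSelfDual (T : Tournament V) (k : ℕ) : Prop :=
  ∀ X : Set V, X.ncard = k → (T.restrict Xᶜ).SelfDual

/-- `{-k}`-reconstructibility: every tournament `{-k}`-hypomorphic to `T` is
isomorphic to `T`. -/
def MinusReconstructible [Fintype V] (T : Tournament V) (k : ℕ) : Prop :=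
  ∀ T' : Tournament V, MinusHypo T T' k → T.Iso T'

/-- Strong interval. -/
def IsStrongInterval (T : Tournament V) (X : Set V) : Prop :=
  T.IsInterval X ∧ ∀ Y : Set V, T.IsInterval Y → (X ∩ Y).Nonempty → X ⊆ Y ∨ Y ⊆ X

/-- `P T` : the maximal strong intervals of `T` distinct from the full vertex
set. -/
def P (T : Tournament V) : Set (Set V) :=
  {X | X.Nonempty ∧ X ≠ Set.univ ∧ T.IsStrongInterval X ∧
    ∀ Y : Set V, Y ≠ Set.univ → T.IsStrongInterval Y → X ⊆ Y → X = Y}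

/-- `Ptilde T` : equals `P T` when `T` is strongly connected; otherwise it
consists of the members of `P T` of size at least 2 together with the maximal
unions of consecutive singleton members (i.e. the maximal intervals of `T` all
of whose elements are singleton members of `P T`). -/
def Ptilde (T : Tournament V) : Set (Set V) :=
  {A | (T.StronglyConnected ∧ A ∈ T.P) ∨
    (¬ T.StronglyConnected ∧
      ((A ∈ T.P ∧ 2 ≤ A.ncard) ∨
        (A.Nonempty ∧ (∀ x ∈ A, ({x} : Set V) ∈ T.P) ∧ T.IsInterval A ∧
          ∀ B : Set V, A ⊆ B → (∀ x ∈ B, ({x} : Set V) ∈ T.P) →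
            T.IsInterval B → A = B)))}

/-- Equality of the quotients of `T` and `T'` by a common interval partition
`Part`: between any two distinct blocks, the arcs of `T` and `T'` agree. -/
def QuotientEq (T T' : Tournament V) (Part : Set (Set V)) : Prop :=
  ∀ X ∈ Part, ∀ Y ∈ Part, X ≠ Y → ∀ x ∈ X, ∀ y ∈ Y, (T.arc x y ↔ T'.arc x y)

/-- The set of vertices outside `I` dominated by every vertex of `I`. -/
def Iplus (T : Tournament V) (I : Set V) : Set V :=
  {x | x ∉ I ∧ ∀ y ∈ I, T.arc y x}

/-- The set of vertices outside `I` dominating every vertex of `I`. -/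
def Iminus (T : Tournament V) (I : Set V) : Set V :=
  {x | x ∉ I ∧ ∀ y ∈ I, T.arc x y}

/-- The 3-cycle `C₃`. -/
def C3Tour : Tournament (Fin 3) where
  arc x y := (x = 0 ∧ y = 1) ∨ (x = 1 ∧ y = 2) ∨ (x = 2 ∧ y = 0)
  irrefl := by decide
  total := by decide

/-- The transitive tournament `O_q` on `q` vertices. -/
def LinOrd (q : ℕ) : Tournament (Fin q) where
  arc x y := x < y
  irrefl x := lt_irrefl x
  total x y h := by
    constructor
    · exact fun hxy hyx => lt_asymm hxy hyx
    · intro hyx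
      exact lt_of_le_of_ne (not_lt.mp hyx) h

/-- The positive diamond `δ⁺` (on `{0,1,2,3}`, cycle `0→1→2→0`, all dominating
the center `3`). -/
def DeltaPlus : Tournament (Fin 4) where
  arc x y := (x = 0 ∧ y = 1) ∨ (x = 1 ∧ y = 2) ∨ (x = 2 ∧ y = 0) ∨
    (x = 0 ∧ y = 3) ∨ (x = 1 ∧ y = 3) ∨ (x = 2 ∧ y = 3)
  irrefl := by decide
  total := by decide

/-- The negative diamond `δ⁻`. -/
def DeltaMinus : Tournament (Fin 4) := DeltaPlus.dual

/-- `T` embeds a diamond: some 4-element subset of the vertices induces a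
diamond. -/
def EmbedsDiamond (T : Tournament V) : Prop :=
  ∃ X : Set V, X.ncard = 4 ∧
    ((T.restrict X).Iso DeltaPlus ∨ (T.restrict X).Iso DeltaMinus)

/-- `X` is a positive diamond of `T` with center `d`. -/
def IsPosDiamond (T : Tournament V) (X : Set V) (d : V) : Prop :=
  X.ncard = 4 ∧ d ∈ X ∧ (T.restrict X).Iso DeltaPlus ∧
    (T.restrict (X \ {d})).Iso C3Tour ∧ ∀ y ∈ X \ {d}, T.arc y d

/-- `X` is a negative diamond of `T` with center `d`. -/
def IsNegDiamond (T : Tournament V) (X : Set V) (d : V) : Prop :=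
  X.ncard = 4 ∧ d ∈ X ∧ (T.restrict X).Iso DeltaMinus ∧
    (T.restrict (X \ {d})).Iso C3Tour ∧ ∀ y ∈ X \ {d}, T.arc d y

/-- The tournament obtained from `H` by dilating the vertex `x` by `R`. -/
def Dilate {α β : Type*} (H : Tournament α) (x : α) (R : Tournament β) :
    Tournament ({y : α // y ≠ x} ⊕ β) where
  arc u v :=
    match u, v with
    | .inl y, .inl z => H.arc y.1 z.1
    | .inl y, .inr _ => H.arc y.1 x
    | .inr _, .inl z => H.arc x z.1
    | .inr u, .inr v => R.arc u v
  irrefl u := by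
    cases u with
    | inl y => exact H.irrefl y.1
    | inr u => exact R.irrefl u
  total u v h := by
    cases u with
    | inl y =>
      cases v with
      | inl z =>
        exact H.total y.1 z.1 (fun e => h (congrArg Sum.inl (Subtype.ext e)))
      | inr v => exact H.total y.1 x y.2
    | inr u =>
      cases v with
      | inl z => exact H.total x z.1 (Ne.symm z.2)
      | inr v => exact R.total u v (fun e => h (congrArg Sum.inr e))

/-- The class `I_{n,K}` (for `K` a set of positive integers representing the
negative indices): tournaments on `n` vertices which are indecomposable, not
self dual, and `{-k}`-self dual for every `k ∈ K`. -/
def ClassI (n : ℕ) (K : Set ℕ) (R : Tournament (Fin n)) : Prop :=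
  R.Indecomposable ∧ ¬ R.SelfDual ∧ ∀ k ∈ K, R.MinusSelfDual k

/-- Membership (up to isomorphism) in the class
`Ω_n = C₃(I_{n-2,{-1,-2,-3}}) ∪ O₃(I_{n-2,{-1,-2,-3}}) ∪ O₂(I_{n-1,{-2,-3}})`. -/
def InOmega (n : ℕ) (T : Tournament V) : Prop :=
  (∃ R : Tournament (Fin (n - 2)), ClassI (n - 2) {1, 2, 3} R ∧
    ∃ x : Fin 3, T.Iso (Dilate C3Tour x R)) ∨
  (∃ R : Tournament (Fin (n - 2)), ClassI (n - 2) {1, 2, 3} R ∧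
    ∃ x : Fin 3, T.Iso (Dilate (LinOrd 3) x R)) ∨
  (∃ R : Tournament (Fin (n - 1)), ClassI (n - 1) {2, 3} R ∧
    ∃ x : Fin 2, T.Iso (Dilate (LinOrd 2) x R))

/-! ### Chunk A : basics, L2, L1, interval transfer -/

section Basics

variable {α β γ : Type*}

lemma arc_total (T : Tournament V) {x y : V} (h : x ≠ y) : T.arc x y ∨ T.arc y x := by
  by_cases hxy : T.arc x y
  · exact Or.inl hxy
  · exact Or.inr (by
      by_contra hyx
      exact hxy ((T.total x y h).mpr (fun h2 => hyx h2)))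

lemma arc_asymm (T : Tournament V) {x y : V} (h : T.arc x y) : ¬ T.arc y x := by
  by_cases hxy : x = y
  · subst hxy; exact absurd h (T.irrefl x)
  · exact fun hyx => ((T.total x y hxy).mp h) hyx

lemma arc_ne (T : Tournament V) {x y : V} (h : T.arc x y) : x ≠ y := by
  rintro rfl; exact T.irrefl x h

lemma not_arc (T : Tournament V) {x y : V} (hne : x ≠ y) (h : ¬ T.arc x y) : T.arc y x :=
  (T.arc_total hne).resolve_left h

lemma iso_refl (T : Tournament V) : T.Iso T := ⟨Equiv.refl V, fun _ _ => Iff.rfl⟩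

lemma iso_symm {T : Tournament V} {T' : Tournament α} (h : T.Iso T') : T'.Iso T := by
  obtain ⟨e, he⟩ := h
  refine ⟨e.symm, fun x y => ?_⟩
  have := he (e.symm x) (e.symm y)
  simpa using this.symm

lemma iso_trans {T : Tournament V} {T' : Tournament α} {T'' : Tournament β}
    (h : T.Iso T') (h' : T'.Iso T'') : T.Iso T'' := by
  obtain ⟨e, he⟩ := h; obtain ⟨f, hf⟩ := h'
  exact ⟨e.trans f, fun x y => (he x y).trans (hf (e x) (e y))⟩

/-- Image of an interval under an isomorphism. -/
lemma isInterval_image {T : Tournament α} {T' : Tournament β} (e : α ≃ β)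
    (he : ∀ x y, T.arc x y ↔ T'.arc (e x) (e y)) {J : Set α} (hJ : T.IsInterval J) :
    T'.IsInterval (e '' J) := by
  intro x hx
  have hx' : e.symm x ∉ J := by
    intro h; exact hx ⟨e.symm x, h, by simp⟩
  rcases hJ (e.symm x) hx' with h | h
  · left; rintro y ⟨z, hz, rfl⟩
    have := (he (e.symm x) z).mp (h z hz)
    simpa using this
  · right; rintro y ⟨z, hz, rfl⟩
    have := (he z (e.symm x)).mp (h z hz)
    simpa using this

/-- Pull back the interval `I` to a restriction. -/
lemma isInterval_preimage (T : Tournament V) {I : Set V} (hI : T.IsInterval I) (U : Set V) :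
    (T.restrict U).IsInterval (Subtype.val ⁻¹' I) := by
  intro x hx
  rcases hI x.1 hx with h | h
  · exact Or.inl (fun y hy => h y.1 hy)
  · exact Or.inr (fun y hy => h y.1 hy)

/-- Interval sizes in an indecomposable tournament. -/
lemma indec_interval_ncard {α : Type*} {S : Tournament α}
    (hS : S.Indecomposable) {J : Set α} (hJ : S.IsInterval J) :
    J.ncard = 0 ∨ J.ncard = 1 ∨ J = Set.univ := by
  rcases hS J hJ with h | h | ⟨x, h⟩
  · left; simp [h]
  · right; right; exact h
  · right; left; simp [h]

/-- Indecomposability transfers along isomorphisms. -/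
lemma indec_of_iso {T : Tournament α} {T' : Tournament β} (h : T.Iso T')
    (hT' : T'.Indecomposable) : T.Indecomposable := by
  obtain ⟨e, he⟩ := h
  intro J hJ
  have := hT' (e '' J) (isInterval_image e he hJ)
  rcases this with h1 | h1 | ⟨x, h1⟩
  · left
    have : J = e.symm '' (e '' J) := by simp
    rw [this, h1]; simp
  · right; left
    have : J = e.symm '' (e '' J) := by simp
    rw [this, h1]; simp
  · right; right
    refine ⟨e.symm x, ?_⟩
    have : J = e.symm '' (e '' J) := by simp
    rw [this, h1]; simp

end Basics

section L2L1

variable {α : Type*}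

/-- L2 : in an indecomposable tournament with at least 3 vertices, every vertex
lies on a 3-cycle. -/
lemma exists_cycle_thru {S : Tournament α} (hind : S.Indecomposable)
    (hcard : 3 ≤ Nat.card α) (v : α) :
    ∃ u w, S.arc v u ∧ S.arc u w ∧ S.arc w v := by
  have hfin : Finite α := Nat.finite_of_card_ne_zero (by omega)
  by_contra hno
  push_neg at hno
  set Ov : Set α := {u | S.arc v u} with hOv
  set Iv : Set α := {u | S.arc u v} with hIv
  have hdisj : ∀ u, u ∈ Ov → u ∉ Iv := fun u hu hu' => S.arc_asymm hu hu'
  have hrule : ∀ z ∈ Iv, ∀ u ∈ Ov, S.arc z u := by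
    intro z hz u hu
    have hzu : z ≠ u := fun h => hdisj u hu (h ▸ hz)
    rcases S.arc_total hzu with h | h
    · exact h
    · exact absurd hz (hno u z hu h)
  have hOint : S.IsInterval Ov := by
    intro z hz
    by_cases hzv : z = v
    · subst hzv; exact Or.inl (fun y hy => hy)
    · left
      have hziv : z ∈ Iv := by
        rcases S.arc_total (Ne.symm hzv : v ≠ z) with h | h
        · exact absurd h hz
        · exact h
      exact fun y hy => hrule z hziv y hy
  have hIint : S.IsInterval Iv := by
    intro z hz
    by_cases hzv : z = v
    · subst hzv; exact Or.inr (fun y hy => hy)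
    · right
      have hzov : z ∈ Ov := by
        rcases S.arc_total (Ne.symm hzv : v ≠ z) with h | h
        · exact h
        · exact absurd h hz
      exact fun y hy => hrule y hy z hzov
  have hOne : Ov ≠ Set.univ := fun h => S.irrefl v (show v ∈ Ov from h ▸ Set.mem_univ v)
  have hIne : Iv ≠ Set.univ := fun h => S.irrefl v (show v ∈ Iv from h ▸ Set.mem_univ v)
  have hOcard : Ov.ncard ≤ 1 := by
    rcases indec_interval_ncard hind hOint with h | h | h
    · omega
    · omega
    · exact absurd h hOne
  have hIcard : Iv.ncard ≤ 1 := by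
    rcases indec_interval_ncard hind hIint with h | h | h
    · omega
    · omega
    · exact absurd h hIne
  have hcover : (Set.univ : Set α) = insert v (Ov ∪ Iv) := by
    ext z
    simp only [Set.mem_univ, true_iff, Set.mem_insert_iff, Set.mem_union]
    by_cases hzv : z = v
    · exact Or.inl hzv
    · rcases S.arc_total (Ne.symm hzv : v ≠ z) with h | h
      · exact Or.inr (Or.inl h)
      · exact Or.inr (Or.inr h)
  have huniv : (Set.univ : Set α).ncard ≤ 1 + (Ov.ncard + Iv.ncard) := by
    calc (Set.univ : Set α).ncard = (insert v (Ov ∪ Iv)).ncard := by rw [← hcover]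
    _ ≤ (Ov ∪ Iv).ncard + 1 := Set.ncard_insert_le v _
    _ ≤ (Ov.ncard + Iv.ncard) + 1 := by
        have := Set.ncard_union_le Ov Iv
        omega
    _ = 1 + (Ov.ncard + Iv.ncard) := by omega
  have huc : (Set.univ : Set α).ncard = Nat.card α := Set.ncard_univ α
  have hO1 : Ov.ncard = 1 := by omega
  have hI1 : Iv.ncard = 1 := by omega
  obtain ⟨u₀, hu₀⟩ := Set.ncard_eq_one.mp hO1
  obtain ⟨w₀, hw₀⟩ := Set.ncard_eq_one.mp hI1
  have hu₀O : u₀ ∈ Ov := by rw [hu₀]; rfl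
  have hw₀I : w₀ ∈ Iv := by rw [hw₀]; rfl
  have hvu : v ≠ u₀ := fun h => S.irrefl v (show S.arc v v from by
    nth_rewrite 2 [h]; exact hu₀O)
  have hDint : S.IsInterval {v, u₀} := by
    intro z hz
    have hzv : z ≠ v := fun h => hz (h ▸ Set.mem_insert v {u₀})
    have hzu : z ≠ u₀ := fun h => hz (h ▸ Set.mem_insert_of_mem v rfl)
    have hzI : z ∈ Iv := by
      rcases S.arc_total (Ne.symm hzv : v ≠ z) with h | h
      · exact absurd (show z ∈ ({u₀} : Set α) from hu₀ ▸ h) (by simpa using hzu)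
      · exact h
    left
    intro y hy
    rcases Set.mem_insert_iff.mp hy with h | h
    · rw [h]; exact hzI
    · rw [Set.mem_singleton_iff] at h
      rw [h]
      exact hrule z hzI u₀ hu₀O
  rcases hind _ hDint with h | h | ⟨x, h⟩
  · have : v ∈ ({v, u₀} : Set α) := Set.mem_insert v {u₀}
    rw [h] at this; exact this
  · have hwv : w₀ ≠ v := fun hh => S.irrefl v (show S.arc v v from by
      nth_rewrite 1 [← hh]; exact hw₀I)
    have hwu : w₀ ≠ u₀ := fun hh => hdisj u₀ hu₀O (hh ▸ hw₀I)
    have : w₀ ∈ ({v, u₀} : Set α) := h ▸ Set.mem_univ w₀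
    rcases this with h' | h'
    · exact hwv h'
    · exact hwu h'
  · have hv : v ∈ ({x} : Set α) := h ▸ Set.mem_insert v {u₀}
    have hu : u₀ ∈ ({x} : Set α) := h ▸ Set.mem_insert_of_mem v rfl
    exact hvu ((Set.mem_singleton_iff.mp hv).trans (Set.mem_singleton_iff.mp hu).symm)

/-- L1 : an indecomposable tournament on at least 3 vertices admits no
partition into two nonempty parts with no straddling 3-cycle. -/
lemma no_straddle {S : Tournament α} (hind : S.Indecomposable) (hcard : 3 ≤ Nat.card α) :
    ∀ N (A B : Set α), A.ncard = N → A ∪ B = Set.univ → Disjoint A B →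
      A.Nonempty → B.Nonempty →
      (∀ a b c, S.arc a b → S.arc b c → S.arc c a →
        ((a ∈ A ∧ b ∈ A ∧ c ∈ A) ∨ (a ∈ B ∧ b ∈ B ∧ c ∈ B))) → False := by
  have hfin : Finite α := Nat.finite_of_card_ne_zero (by omega)
  intro N
  induction N using Nat.strong_induction_on with
  | _ N ih =>
    intro A B hN hU hdis hA hB Hs
    have hmemB : ∀ {z}, z ∉ A → z ∈ B := by
      intro z hz
      have : z ∈ A ∪ B := hU ▸ Set.mem_univ z
      rcases this with h | h
      · exact absurd h hz
      · exact h
    have hAB : ∀ {a b}, a ∈ A → b ∈ B → a ≠ b := by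
      intro a b ha hb h
      exact (Set.disjoint_left.mp hdis) ha (h ▸ hb)
    by_cases hA1 : A.ncard = 1
    · -- base case : |A| = 1, use L2
      obtain ⟨a, ha⟩ := Set.ncard_eq_one.mp hA1
      obtain ⟨u, w, h1, h2, h3⟩ := exists_cycle_thru hind hcard a
      have hu : u ∉ A := by
        rw [ha]; simp only [Set.mem_singleton_iff]
        exact fun h => S.irrefl a (h ▸ h1)
      have hw : w ∉ A := by
        rw [ha]; simp only [Set.mem_singleton_iff]
        exact fun h => S.irrefl a (h ▸ h3)
      have haA : a ∈ A := by rw [ha]; rfl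
      rcases Hs a u w h1 h2 h3 with ⟨_, h', _⟩ | ⟨h', _, _⟩
      · exact hu h'
      · exact (Set.disjoint_left.mp hdis) haA h'
    have hA0 : A.ncard ≠ 0 := by
      have := Set.ncard_pos (Set.toFinite A) |>.mpr hA
      omega
    have hA2 : 2 ≤ A.ncard := by omega
    by_cases hmix : ∀ b ∈ B, (∀ a ∈ A, S.arc b a) ∨ (∀ a ∈ A, S.arc a b)
    · -- A is a nontrivial interval
      have hint : S.IsInterval A := by
        intro z hz
        exact hmix z (hmemB hz)
      rcases hind A hint with h | h | ⟨x, h⟩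
      · exact hA.ne_empty h
      · obtain ⟨b, hb⟩ := hB
        exact (Set.disjoint_left.mp hdis) (h ▸ Set.mem_univ b) hb
      · rw [h] at hA2; simp at hA2
    · push_neg at hmix
      obtain ⟨b₀, hb₀, hmix1, hmix2⟩ := hmix
      obtain ⟨a₁', ha₁'A, hna₁'⟩ := hmix1
      obtain ⟨a₂', ha₂'A, hna₂'⟩ := hmix2
      set O : α → Set α := fun b => {a | a ∈ A ∧ S.arc b a} with hOdef
      -- final segment property
      have hfinseg : ∀ b ∈ B, ∀ a ∈ A, a ∉ O b → ∀ w ∈ O b, S.arc a w := by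
        intro b hb a ha haO w hwO
        have hbw : S.arc b w := hwO.2
        have hwA : w ∈ A := hwO.1
        have haw : a ≠ w := fun h => haO (h ▸ hwO)
        have hab : S.arc a b := by
          rcases S.arc_total (hAB ha hb) with h | h
          · exact h
          · exact absurd (⟨ha, h⟩ : a ∈ O b) haO
        by_contra haw'
        have hwa : S.arc w a := S.not_arc haw haw'
        rcases Hs a b w hab hbw hwa with ⟨_, hbA, _⟩ | ⟨haB, _, _⟩
        · exact (Set.disjoint_left.mp hdis) hbA hb
        · exact (Set.disjoint_left.mp hdis) ha haB
      -- chain property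
      have hchain : ∀ b ∈ B, ∀ b' ∈ B, O b ⊆ O b' ∨ O b' ⊆ O b := by
        intro b hb b' hb'
        by_contra hcon
        push_neg at hcon
        rw [Set.not_subset, Set.not_subset] at hcon
        obtain ⟨⟨a, haOb, haOb'⟩, ⟨a', ha'Ob', ha'Ob⟩⟩ := hcon
        have haA : a ∈ A := haOb.1
        have ha'A : a' ∈ A := ha'Ob'.1
        have hba : S.arc b a := haOb.2
        have hb'a' : S.arc b' a' := ha'Ob'.2
        have hab' : S.arc a b' := by
          rcases S.arc_total (hAB haA hb') with h | h
          · exact h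
          · exact absurd (⟨haA, h⟩ : a ∈ O b') haOb'
        have ha'b : S.arc a' b := by
          rcases S.arc_total (hAB ha'A hb) with h | h
          · exact h
          · exact absurd (⟨ha'A, h⟩ : a' ∈ O b) ha'Ob
        have hbb' : b ≠ b' := by
          rintro rfl
          exact haOb' haOb
        rcases S.arc_total hbb' with h | h
        · rcases Hs b' a' b hb'a' ha'b h with ⟨hb'A, _, _⟩ | ⟨_, ha'B, _⟩
          · exact (Set.disjoint_left.mp hdis) hb'A hb'
          · exact (Set.disjoint_left.mp hdis) ha'A ha'B
        · rcases Hs b a b' hba hab' h with ⟨hbA, _, _⟩ | ⟨_, haB, _⟩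
          · exact (Set.disjoint_left.mp hdis) hbA hb
          · exact (Set.disjoint_left.mp hdis) haA haB
      -- b₀ is mixed : O b₀ is nonempty and ≠ A
      have hOb₀ne : (O b₀).Nonempty := by
        refine ⟨a₂', ha₂'A, ?_⟩
        exact S.not_arc (hAB ha₂'A hb₀) hna₂'
      -- the minimal nonempty O b
      set Fam : Set (Set α) := {J | ∃ b ∈ B, J = O b ∧ J.Nonempty} with hFam
      have hFamne : Fam.Nonempty := ⟨O b₀, b₀, hb₀, rfl, hOb₀ne⟩
      obtain ⟨Wm, hWmF, hWmmin⟩ := Set.exists_min_image Fam Set.ncard (Set.toFinite Fam) hFamne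
      obtain ⟨b₁, hb₁B, hWmO, hWmne⟩ := hWmF
      have hsub : ∀ b ∈ B, (O b).Nonempty → Wm ⊆ O b := by
        intro b hb hOne'
        rcases hchain b₁ hb₁B b hb with h | h
        · exact hWmO ▸ h
        · have h1 : O b ⊆ Wm := hWmO ▸ h
          have h2 : Wm.ncard ≤ (O b).ncard := hWmmin (O b) ⟨b, hb, rfl, hOne'⟩
          have : O b = Wm := Set.eq_of_subset_of_ncard_le h1 h2 (Set.toFinite _)
          rw [← this]
      have hWmA : Wm ⊆ A := by rw [hWmO]; exact fun a ha => ha.1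
      -- Wm is an interval
      have hWint : S.IsInterval Wm := by
        intro z hz
        by_cases hzB : z ∈ B
        · by_cases hOz : (O z).Nonempty
          · left; intro y hy
            exact ((hsub z hzB hOz) hy).2
          · right; intro y hy
            have hyA : y ∈ A := hWmA hy
            have : y ∉ O z := fun h => hOz ⟨y, h⟩
            rcases S.arc_total (hAB hyA hzB) with h | h
            · exact h
            · exact absurd (⟨hyA, h⟩ : y ∈ O z) this
        · have hzA : z ∈ A := by
            rcases (hU ▸ Set.mem_univ z : z ∈ A ∪ B) with h | h
            · exact h
            · exact absurd h hzB
          left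
          intro y hy
          exact hfinseg b₁ hb₁B z hzA (fun h => hz (hWmO ▸ h)) y (hWmO ▸ hy)
      -- Wm is a singleton {a₁}
      obtain ⟨a₁, ha₁⟩ : ∃ x, Wm = {x} := by
        rcases hind Wm hWint with h | h | h
        · exact absurd h hWmne.ne_empty
        · exfalso
          exact (Set.disjoint_left.mp hdis) (hWmA (h ▸ Set.mem_univ b₀)) hb₀
        · exact h
      have ha₁A : a₁ ∈ A := hWmA (ha₁ ▸ rfl)
      -- a₁ is a sink of A
      have hsink : ∀ a ∈ A, a ≠ a₁ → S.arc a a₁ := by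
        intro a ha hne
        have haW : a ∉ Wm := by rw [ha₁]; simpa using hne
        exact hfinseg b₁ hb₁B a ha (fun h => haW (hWmO ▸ h)) a₁ (hWmO ▸ (ha₁ ▸ rfl))
      -- induct with A' = A \ {a₁}, B' = insert a₁ B
      have hA'card : (A \ {a₁}).ncard + 1 = A.ncard :=
        Set.ncard_diff_singleton_add_one ha₁A (Set.toFinite A)
      refine ih (A \ {a₁}).ncard (by omega) (A \ {a₁}) (insert a₁ B) rfl ?_ ?_ ?_ ?_ ?_
      · rw [← hU]
        ext z
        simp only [Set.mem_union, Set.mem_diff, Set.mem_singleton_iff, Set.mem_insert_iff]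
        constructor
        · rintro (⟨h, _⟩ | (rfl | h))
          · exact Or.inl h
          · exact Or.inl ha₁A
          · exact Or.inr h
        · rintro (h | h)
          · by_cases hz : z = a₁
            · exact Or.inr (Or.inl hz)
            · exact Or.inl ⟨h, hz⟩
          · exact Or.inr (Or.inr h)
      · rw [Set.disjoint_left]
        rintro z ⟨hzA, hz1⟩ (rfl | hzB)
        · exact hz1 rfl
        · exact (Set.disjoint_left.mp hdis) hzA hzB
      · -- A \ {a₁} nonempty
        have : (A \ {a₁}).ncard ≠ 0 := by omega
        exact Set.nonempty_of_ncard_ne_zero this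
      · exact ⟨a₁, Set.mem_insert a₁ B⟩
      · intro a b c h1 h2 h3
        rcases Hs a b c h1 h2 h3 with ⟨ha, hb, hc⟩ | ⟨ha, hb, hc⟩
        · -- all in A; none can be a₁ since a₁ is a sink of A
          have hna : a ≠ a₁ := by
            rintro rfl
            exact S.arc_asymm h1 (hsink b hb (S.arc_ne h1).symm)
          have hnb : b ≠ a₁ := by
            rintro rfl
            exact S.arc_asymm h2 (hsink c hc (S.arc_ne h2).symm)
          have hnc : c ≠ a₁ := by
            rintro rfl
            exact S.arc_asymm h3 (hsink a ha (S.arc_ne h3).symm)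
          exact Or.inl ⟨⟨ha, hna⟩, ⟨hb, hnb⟩, ⟨hc, hnc⟩⟩
        · exact Or.inr ⟨Set.mem_insert_of_mem _ ha, Set.mem_insert_of_mem _ hb,
            Set.mem_insert_of_mem _ hc⟩

end L2L1




section Counting

open scoped Classical

variable {V : Type*} [Fintype V] [DecidableEq V] {β : Type*} [Fintype β]

/-- `W` carries a copy of the pattern `P`. -/
def IsCopy (T : Tournament V) (P : Tournament β) (W : Finset V) : Prop :=
  ∃ g : β → V, Function.Injective g ∧ (∀ i j, P.arc i j ↔ T.arc (g i) (g j)) ∧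
    Finset.image g Finset.univ = W

/-- The set of `P`-copies inside `U`. -/
noncomputable def copiesF (T : Tournament V) (P : Tournament β) (U : Finset V) :
    Finset (Finset V) :=
  (U.powersetCard (Fintype.card β)).filter (fun W => IsCopy T P W)

lemma mem_copiesF {T : Tournament V} {P : Tournament β} {U W : Finset V} :
    W ∈ copiesF T P U ↔ (W ⊆ U ∧ W.card = Fintype.card β) ∧ IsCopy T P W := by
  simp [copiesF, Finset.mem_powersetCard]

/-- From a copy to an isomorphism of the restriction. -/
lemma iso_of_isCopy {T : Tournament V} {P : Tournament β} {W : Finset V}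
    (h : IsCopy T P W) : (T.restrict ↑W).Iso P := by
  obtain ⟨g, hinj, harc, him⟩ := h
  have hmem : ∀ i, g i ∈ (↑W : Set V) := by
    intro i
    rw [← him]
    simp only [Finset.coe_image, Set.mem_image, Finset.mem_coe]
    exact ⟨i, by simp, rfl⟩
  set gg : β → ↥(↑W : Set V) := fun i => ⟨g i, hmem i⟩ with hgg
  have hbij : Function.Bijective gg := by
    constructor
    · intro i j hij
      exact hinj (congrArg Subtype.val hij)
    · rintro ⟨w, hw⟩
      have : w ∈ Finset.image g Finset.univ := him ▸ (by exact_mod_cast hw)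
      obtain ⟨i, _, hi⟩ := Finset.mem_image.mp this
      exact ⟨i, Subtype.ext hi⟩
  set E := Equiv.ofBijective gg hbij with hE
  refine ⟨E.symm, fun x y => ?_⟩
  have hx : g (E.symm x) = ↑x := congrArg Subtype.val (E.apply_symm_apply x)
  have hy : g (E.symm y) = ↑y := congrArg Subtype.val (E.apply_symm_apply y)
  have := harc (E.symm x) (E.symm y)
  rw [hx, hy] at this
  exact this.symm

/-- From an isomorphism of the restriction to a copy. -/
lemma isCopy_of_iso {T : Tournament V} {P : Tournament β} {W : Finset V}
    (h : (T.restrict ↑W).Iso P) : IsCopy T P W := by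
  obtain ⟨e, he⟩ := h
  refine ⟨fun i => ↑(e.symm i), ?_, ?_, ?_⟩
  · intro i j hij
    exact e.symm.injective (Subtype.ext hij)
  · intro i j
    have := he (e.symm i) (e.symm j)
    simpa [Tournament.restrict] using this.symm
  · ext v
    simp only [Finset.mem_image, Finset.mem_univ, true_and]
    constructor
    · rintro ⟨i, rfl⟩
      exact_mod_cast (e.symm i).2
    · intro hv
      exact ⟨e ⟨v, by exact_mod_cast hv⟩, by simp⟩

lemma card_of_isCopy {T : Tournament V} {P : Tournament β} {W : Finset V}
    (h : IsCopy T P W) : W.card = Fintype.card β := by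
  obtain ⟨g, hinj, -, him⟩ := h
  rw [← him, Finset.card_image_of_injective _ hinj, Finset.card_univ]

/-- Transporting copies along an isomorphism of ambient restrictions. -/
noncomputable def chart (U : Finset V) (f : ↥(↑U : Set V) ≃ ↥(↑U : Set V))
    (W : Finset V) : Finset V :=
  Finset.image (fun u => (↑(f u) : V))
    (Finset.univ.filter (fun u : ↥(↑U : Set V) => (↑u : V) ∈ W))

lemma mem_chart {U : Finset V} {f : ↥(↑U : Set V) ≃ ↥(↑U : Set V)} {W : Finset V}
    {v : V} : v ∈ chart U f W ↔ ∃ u : ↥(↑U : Set V), (↑u : V) ∈ W ∧ (↑(f u) : V) = v := by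
  simp [chart]

lemma chart_subset {U : Finset V} {f : ↥(↑U : Set V) ≃ ↥(↑U : Set V)} {W : Finset V} :
    chart U f W ⊆ U := by
  intro v hv
  obtain ⟨u, -, rfl⟩ := mem_chart.mp hv
  exact_mod_cast (f u).2

lemma chart_chart {U : Finset V} {f : ↥(↑U : Set V) ≃ ↥(↑U : Set V)} {W : Finset V}
    (hWU : W ⊆ U) : chart U f.symm (chart U f W) = W := by
  ext v
  rw [mem_chart]
  constructor
  · rintro ⟨u, hu, rfl⟩
    obtain ⟨u', hu', he⟩ := mem_chart.mp hu
    have : u = f u' := Subtype.ext he.symm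
    rw [this, f.symm_apply_apply]
    exact hu'
  · intro hv
    refine ⟨f ⟨v, by exact_mod_cast hWU hv⟩, ?_, ?_⟩
    · rw [mem_chart]
      exact ⟨⟨v, by exact_mod_cast hWU hv⟩, hv, rfl⟩
    · rw [f.symm_apply_apply]

lemma isCopy_chart {T T' : Tournament V} {P : Tournament β} {U : Finset V}
    {f : ↥(↑U : Set V) ≃ ↥(↑U : Set V)}
    (hf : ∀ x y, (T.restrict ↑U).arc x y ↔ (T'.restrict ↑U).arc (f x) (f y))
    {W : Finset V} (hWU : W ⊆ U) (h : IsCopy T P W) : IsCopy T' P (chart U f W) := by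
  obtain ⟨g, hinj, harc, him⟩ := h
  have hmem : ∀ i, g i ∈ W := by
    intro i
    rw [← him]
    exact Finset.mem_image.mpr ⟨i, by simp, rfl⟩
  set gt : β → ↥(↑U : Set V) := fun i => ⟨g i, by exact_mod_cast hWU (hmem i)⟩ with hgt
  refine ⟨fun i => ↑(f (gt i)), ?_, ?_, ?_⟩
  · intro i j hij
    have h1 : f (gt i) = f (gt j) := Subtype.ext hij
    have h2 : gt i = gt j := f.injective h1
    exact hinj (congrArg Subtype.val h2)
  · intro i j
    exact (harc i j).trans (hf (gt i) (gt j))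
  · ext v
    simp only [Finset.mem_image, Finset.mem_univ, true_and]
    rw [mem_chart]
    constructor
    · rintro ⟨i, rfl⟩
      exact ⟨gt i, hmem i, rfl⟩
    · rintro ⟨u, hu, rfl⟩
      have hu' : (↑u : V) ∈ Finset.image g Finset.univ := him ▸ hu
      obtain ⟨i, -, hi⟩ := Finset.mem_image.mp hu'
      exact ⟨i, by rw [show gt i = u from Subtype.ext hi]⟩

/-- Copy counts are invariant under isomorphisms of ambient restrictions. -/
lemma copiesF_card_congr {T T' : Tournament V} {P : Tournament β} {U : Finset V}
    (h : (T.restrict ↑U).Iso (T'.restrict ↑U)) :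
    (copiesF T P U).card = (copiesF T' P U).card := by
  obtain ⟨f, hf⟩ := h
  have hf' : ∀ x y, (T'.restrict ↑U).arc x y ↔ (T.restrict ↑U).arc (f.symm x) (f.symm y) := by
    intro x y
    have := hf (f.symm x) (f.symm y)
    rw [f.apply_symm_apply, f.apply_symm_apply] at this
    exact this.symm
  refine Finset.card_bij (fun W _ => chart U f W) ?_ ?_ ?_
  · intro W hW
    obtain ⟨⟨hWU, hcard⟩, hcopy⟩ := mem_copiesF.mp hW
    have hc := isCopy_chart hf hWU hcopy
    exact mem_copiesF.mpr ⟨⟨chart_subset, card_of_isCopy hc⟩, hc⟩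
  · intro W₁ h₁ W₂ h₂ h
    have s₁ := (mem_copiesF.mp h₁).1.1
    have s₂ := (mem_copiesF.mp h₂).1.1
    have h' : chart U f W₁ = chart U f W₂ := h
    have := congrArg (chart U f.symm) h'
    rwa [chart_chart s₁, chart_chart s₂] at this
  · intro W' hW'
    obtain ⟨⟨hWU, hcard⟩, hcopy⟩ := mem_copiesF.mp hW'
    refine ⟨chart U f.symm W', ?_, ?_⟩
    · have hc := isCopy_chart hf' hWU hcopy
      exact mem_copiesF.mpr ⟨⟨chart_subset, card_of_isCopy hc⟩, hc⟩
    · show chart U f (chart U f.symm W') = W'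
      have := chart_chart (f := f.symm) hWU
      rwa [Equiv.symm_symm] at this

/-- Counting supersets of `L` of size `d` disjoint from `W`. -/
lemma count_supersets (W L : Finset V) (d : ℕ) (hdl : L.card ≤ d) (hLW : Disjoint L W) :
    ((Finset.univ.powersetCard d).filter (fun X => Disjoint W X ∧ L ⊆ X)).card
    = (Fintype.card V - W.card - L.card).choose (d - L.card) := by
  have key : ((Finset.univ \ (W ∪ L)).powersetCard (d - L.card)).card
      = (Fintype.card V - W.card - L.card).choose (d - L.card) := by
    rw [Finset.card_powersetCard, Finset.card_sdiff_of_subset (Finset.subset_univ _),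
      Finset.card_univ, Finset.card_union_of_disjoint hLW.symm]
    congr 1
    omega
  rw [← key]
  refine Finset.card_bij (fun X _ => X \ L) ?_ ?_ ?_
  · intro X hX
    rw [Finset.mem_filter, Finset.mem_powersetCard] at hX
    obtain ⟨⟨_, hXcard⟩, hdisj, hLX⟩ := hX
    rw [Finset.mem_powersetCard]
    constructor
    · rw [Finset.subset_sdiff]
      refine ⟨Finset.subset_univ _, ?_⟩
      rw [Finset.disjoint_union_right]
      exact ⟨Finset.disjoint_of_subset_left (Finset.sdiff_subset) hdisj.symm,
        Finset.sdiff_disjoint⟩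
    · rw [Finset.card_sdiff_of_subset hLX, hXcard]
  · intro X₁ h₁ X₂ h₂ h
    rw [Finset.mem_filter] at h₁ h₂
    have h' : X₁ \ L = X₂ \ L := h
    have e₁ : X₁ \ L ∪ L = X₁ := Finset.sdiff_union_of_subset h₁.2.2
    have e₂ : X₂ \ L ∪ L = X₂ := Finset.sdiff_union_of_subset h₂.2.2
    rw [← e₁, ← e₂, h']
  · intro Z hZ
    rw [Finset.mem_powersetCard] at hZ
    obtain ⟨hZsub, hZcard⟩ := hZ
    rw [Finset.subset_sdiff, Finset.disjoint_union_right] at hZsub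
    obtain ⟨-, hZW, hZL⟩ := hZsub
    refine ⟨Z ∪ L, ?_, ?_⟩
    · rw [Finset.mem_filter, Finset.mem_powersetCard]
      refine ⟨⟨Finset.subset_univ _, ?_⟩, ?_, Finset.subset_union_right⟩
      · rw [Finset.card_union_of_disjoint hZL, hZcard]
        omega
      · rw [Finset.disjoint_union_right]
        exact ⟨hZW.symm, hLW.symm⟩
    · show (Z ∪ L) \ L = Z
      ext a
      simp only [Finset.mem_sdiff, Finset.mem_union]
      constructor
      · rintro ⟨h | h, hn⟩
        · exact h
        · exact absurd h hn
      · intro h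
        exact ⟨Or.inl h, fun hl => Finset.disjoint_left.mp hZL h hl⟩

/-- Inner count over `X`. -/
lemma inner_count (W A : Finset V) (d ℓ : ℕ) (hl : ℓ ≤ d) :
    ∑ X ∈ Finset.univ.powersetCard d,
        (if Disjoint W X then ((X ∩ A).card.choose ℓ) else 0)
    = (Fintype.card V - W.card - ℓ).choose (d - ℓ) * (A \ W).card.choose ℓ := by
  have hpc : ∀ (B : Finset V), B.powersetCard ℓ
      = (Finset.univ.powersetCard ℓ).filter (fun L => L ⊆ B) := by
    intro B
    ext L
    simp only [Finset.mem_powersetCard, Finset.mem_filter, Finset.subset_univ, true_and]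
    tauto
  have step1 : ∀ X : Finset V, (X ∩ A).card.choose ℓ
      = ∑ L ∈ Finset.univ.powersetCard ℓ, (if L ⊆ X ∩ A then 1 else 0) := by
    intro X
    rw [← Finset.card_powersetCard, hpc (X ∩ A), Finset.card_filter]
  have step2 : ∀ X : Finset V,
      (if Disjoint W X then ((X ∩ A).card.choose ℓ) else 0)
      = ∑ L ∈ Finset.univ.powersetCard ℓ,
          (if Disjoint W X ∧ L ⊆ X ∩ A then 1 else 0) := by
    intro X
    by_cases h : Disjoint W X
    · rw [if_pos h, step1 X]
      refine Finset.sum_congr rfl (fun L _ => ?_)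
      simp [h]
    · rw [if_neg h]
      symm
      refine Finset.sum_eq_zero (fun L _ => ?_)
      simp [h]
  calc ∑ X ∈ Finset.univ.powersetCard d,
        (if Disjoint W X then ((X ∩ A).card.choose ℓ) else 0)
      = ∑ X ∈ Finset.univ.powersetCard d, ∑ L ∈ Finset.univ.powersetCard ℓ,
          (if Disjoint W X ∧ L ⊆ X ∩ A then 1 else 0) :=
        Finset.sum_congr rfl (fun X _ => step2 X)
    _ = ∑ L ∈ Finset.univ.powersetCard ℓ, ∑ X ∈ Finset.univ.powersetCard d,
          (if Disjoint W X ∧ L ⊆ X ∩ A then 1 else 0) := Finset.sum_comm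
    _ = ∑ L ∈ Finset.univ.powersetCard ℓ,
          (if L ⊆ A \ W then (Fintype.card V - W.card - ℓ).choose (d - ℓ) else 0) := by
        refine Finset.sum_congr rfl (fun L hL => ?_)
        have hLcard : L.card = ℓ := (Finset.mem_powersetCard.mp hL).2
        by_cases hLAW : L ⊆ A \ W
        · rw [if_pos hLAW]
          rw [Finset.subset_sdiff] at hLAW
          obtain ⟨hLA, hLW⟩ := hLAW
          have heq : ∀ X : Finset V, (Disjoint W X ∧ L ⊆ X ∩ A) ↔ (Disjoint W X ∧ L ⊆ X) := by
            intro X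
            rw [Finset.subset_inter_iff]
            tauto
          calc ∑ X ∈ Finset.univ.powersetCard d,
                (if Disjoint W X ∧ L ⊆ X ∩ A then 1 else 0)
              = ∑ X ∈ Finset.univ.powersetCard d,
                (if Disjoint W X ∧ L ⊆ X then 1 else 0) :=
                Finset.sum_congr rfl (fun X _ => if_congr (heq X) rfl rfl)
            _ = ((Finset.univ.powersetCard d).filter
                  (fun X => Disjoint W X ∧ L ⊆ X)).card := (Finset.card_filter _ _).symm
            _ = (Fintype.card V - W.card - L.card).choose (d - L.card) :=
                count_supersets W L d (hLcard ▸ hl) hLW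
            _ = (Fintype.card V - W.card - ℓ).choose (d - ℓ) := by rw [hLcard]
        · rw [if_neg hLAW]
          refine Finset.sum_eq_zero (fun X _ => ?_)
          rw [if_neg]
          rintro ⟨hdisj, hsub⟩
          apply hLAW
          rw [Finset.subset_sdiff]
          rw [Finset.subset_inter_iff] at hsub
          exact ⟨hsub.2, Finset.disjoint_of_subset_left hsub.1 hdisj.symm⟩
    _ = (Fintype.card V - W.card - ℓ).choose (d - ℓ) * (A \ W).card.choose ℓ := by
        rw [← Finset.sum_filter, Finset.sum_const, ← hpc (A \ W), Finset.card_powersetCard,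
          smul_eq_mul, mul_comm]

/-- The master double-counting identity. -/
lemma master (T : Tournament V) (P : Tournament β) (A : Finset V) (d ℓ : ℕ) (hℓ : ℓ ≤ d) :
    ∑ X ∈ Finset.univ.powersetCard d,
      (X ∩ A).card.choose ℓ * (copiesF T P (Finset.univ \ X)).card
    = (Fintype.card V - Fintype.card β - ℓ).choose (d - ℓ) *
      ∑ W ∈ copiesF T P Finset.univ, ((A \ W).card.choose ℓ) := by
  have hsdiff : ∀ X : Finset V, copiesF T P (Finset.univ \ X)
      = (copiesF T P Finset.univ).filter (fun W => Disjoint W X) := by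
    intro X
    ext W
    rw [mem_copiesF, Finset.mem_filter, mem_copiesF, Finset.subset_sdiff]
    simp only [Finset.subset_univ, true_and]
    tauto
  calc ∑ X ∈ Finset.univ.powersetCard d,
        (X ∩ A).card.choose ℓ * (copiesF T P (Finset.univ \ X)).card
      = ∑ X ∈ Finset.univ.powersetCard d, ∑ W ∈ copiesF T P Finset.univ,
          (if Disjoint W X then (X ∩ A).card.choose ℓ else 0) := by
        refine Finset.sum_congr rfl (fun X _ => ?_)
        rw [hsdiff X, Finset.card_filter, Finset.mul_sum]
        refine Finset.sum_congr rfl (fun W _ => ?_)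
        by_cases h : Disjoint W X <;> simp [h]
    _ = ∑ W ∈ copiesF T P Finset.univ, ∑ X ∈ Finset.univ.powersetCard d,
          (if Disjoint W X then (X ∩ A).card.choose ℓ else 0) := Finset.sum_comm
    _ = ∑ W ∈ copiesF T P Finset.univ,
          (Fintype.card V - Fintype.card β - ℓ).choose (d - ℓ) * (A \ W).card.choose ℓ := by
        refine Finset.sum_congr rfl (fun W hW => ?_)
        rw [inner_count W A d ℓ hℓ, (mem_copiesF.mp hW).1.2]
    _ = (Fintype.card V - Fintype.card β - ℓ).choose (d - ℓ) *
          ∑ W ∈ copiesF T P Finset.univ, ((A \ W).card.choose ℓ) := by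
        rw [Finset.mul_sum]

/-- The key consequence of hypomorphy : weighted copy counts relative to a
fixed set `A` agree for `T` and `T'`. -/
lemma u_eq {T T' : Tournament V} (P : Tournament β) (A : Finset V) (d : ℕ)
    (hiso : ∀ X : Finset V, X.card = d →
      (T.restrict ↑(Finset.univ \ X)).Iso (T'.restrict ↑(Finset.univ \ X)))
    (hk : Fintype.card β + d ≤ Fintype.card V) (ℓ : ℕ) (hℓ : ℓ ≤ d) :
    ∑ W ∈ copiesF T P Finset.univ, ((A \ W).card.choose ℓ)
    = ∑ W ∈ copiesF T' P Finset.univ, ((A \ W).card.choose ℓ) := by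
  have hpos : 0 < (Fintype.card V - Fintype.card β - ℓ).choose (d - ℓ) := by
    apply Nat.choose_pos
    omega
  apply Nat.eq_of_mul_eq_mul_left hpos
  rw [← master T P A d ℓ hℓ, ← master T' P A d ℓ hℓ]
  refine Finset.sum_congr rfl (fun X hX => ?_)
  have hXcard : X.card = d := (Finset.mem_powersetCard.mp hX).2
  rw [copiesF_card_congr (hiso X hXcard)]

end Counting

section SinkExt

variable {γ : Type*}

/-- Adjoin a sink (dominated by everything) to a tournament. -/
def sinkExt (Q : Tournament γ) : Tournament (Option γ) where
  arc x y :=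
    match x, y with
    | some a, some b => Q.arc a b
    | some _, none => True
    | none, _ => False
  irrefl x := by cases x <;> simp [Q.irrefl]
  total x y h := by
    cases x with
    | none =>
      cases y with
      | none => exact absurd rfl h
      | some b => simp
    | some a =>
      cases y with
      | none => simp
      | some b =>
        have hab : a ≠ b := fun hh => h (by rw [hh])
        simpa using Q.total a b hab

lemma sinkExt_interval [Fintype γ] {Q : Tournament γ} (hQ : Q.Indecomposable)
    (h3 : 3 ≤ Fintype.card γ) {K : Set (Option γ)} (hK : (sinkExt Q).IsInterval K) :
    K.ncard = 0 ∨ K.ncard = 1 ∨ K = Set.range some ∨ K = Set.univ := by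
  classical
  set K' : Set γ := some ⁻¹' K with hK'
  by_cases hn : none ∈ K
  · by_cases hK'univ : K' = Set.univ
    · right; right; right
      ext o
      simp only [Set.mem_univ, iff_true]
      cases o with
      | none => exact hn
      | some a => exact (hK'univ ▸ Set.mem_univ a : a ∈ K')
    · -- none ∈ K and some u ∉ K for some u
      have hdom : ∀ u, u ∉ K' → ∀ k ∈ K', Q.arc u k := by
        intro u hu k hk
        have hu' : (some u : Option γ) ∉ K := hu
        rcases hK (some u) hu' with h | h
        · exact h (some k) hk
        · exact absurd (h none hn) (by simp [sinkExt])
      have hK'int : Q.IsInterval K' := fun u hu => Or.inl (hdom u hu)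
      rcases hQ K' hK'int with h | h | ⟨z, h⟩
      · -- K = {none}
        right; left
        have : K = {none} := by
          ext o
          cases o with
          | none => simpa using hn
          | some a =>
            simp only [Set.mem_singleton_iff, reduceCtorEq, iff_false]
            intro ha
            exact absurd (show a ∈ K' from ha) (h ▸ Set.notMem_empty a)
        rw [this]; simp
      · exact absurd h hK'univ
      · -- K' = {z} : impossible
        exfalso
        have hzdom : ∀ u, u ≠ z → Q.arc u z := by
          intro u hu
          refine hdom u (fun hmem => hu ?_) z (by rw [h]; rfl)
          have : u ∈ ({z} : Set γ) := h ▸ hmem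
          simpa using this
        have hint : Q.IsInterval {z}ᶜ := by
          intro u hu
          have : u = z := by
            by_contra huz
            exact hu (Set.mem_compl_iff _ _ |>.mpr (by simpa using huz))
          subst this
          right
          intro y hy
          exact hzdom y (by simpa using hy)
        have hcompl : ({z}ᶜ : Set γ).ncard + 1 = Fintype.card γ := by
          have h2 := Set.ncard_add_ncard_compl ({z} : Set γ)
          rw [Set.ncard_singleton, Nat.card_eq_fintype_card] at h2
          omega
        rcases hQ _ hint with h1 | h1 | ⟨w, h1⟩
        · rw [h1] at hcompl
          simp at hcompl
          omega
        · have : z ∈ ({z}ᶜ : Set γ) := h1 ▸ Set.mem_univ z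
          exact this rfl
        · rw [h1] at hcompl
          rw [Set.ncard_singleton] at hcompl
          omega
  · -- none ∉ K : K ⊆ range some
    have hKim : K = some '' K' := by
      ext o
      cases o with
      | none => simpa using hn
      | some a => simp [hK']
    have hK'int : Q.IsInterval K' := by
      intro u hu
      have hu' : (some u : Option γ) ∉ K := hu
      rcases hK (some u) hu' with h | h
      · exact Or.inl (fun k hk => h (some k) hk)
      · exact Or.inr (fun k hk => h (some k) hk)
    rcases hQ K' hK'int with h | h | ⟨z, h⟩
    · left
      rw [hKim, h]
      simp
    · right; right; left
      rw [hKim, h]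
      simp [Set.range]
    · right; left
      rw [hKim, h]
      simp

end SinkExt

section Cycles

variable {V : Type*}

/-- `T'` has a 3-cycle on every 3-set carrying a 3-cycle of `T`. -/
def SameC3 (T T' : Tournament V) : Prop :=
  ∀ x y z : V, T.arc x y → T.arc y z → T.arc z x →
    ∃ u v w, ({u, v, w} : Set V) = {x, y, z} ∧ T'.arc u v ∧ T'.arc v w ∧ T'.arc w u

lemma cycle_inout (T : Tournament V) {x p q u v w : V}
    (hset : ({u, v, w} : Set V) = {x, p, q})
    (c1 : T.arc u v) (c2 : T.arc v w) (c3 : T.arc w u) :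
    (∃ t, (t = p ∨ t = q) ∧ T.arc t x) ∧ (∃ t, (t = p ∨ t = q) ∧ T.arc x t) := by
  have hx : x ∈ ({u, v, w} : Set V) := by
    rw [hset]; exact Set.mem_insert x {p, q}
  have hmem : ∀ t, t ∈ ({u, v, w} : Set V) → t = x ∨ (t = p ∨ t = q) := by
    intro t ht
    rw [hset] at ht
    simpa using ht
  simp only [Set.mem_insert_iff, Set.mem_singleton_iff] at hx
  rcases hx with rfl | rfl | rfl
  · refine ⟨⟨w, ?_, c3⟩, ⟨v, ?_, c1⟩⟩
    · rcases hmem w (by simp) with h | h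
      · exact absurd (h ▸ c3 : T.arc w w) (T.irrefl _)
      · exact h
    · rcases hmem v (by simp) with h | h
      · exact absurd (h ▸ c1 : T.arc v v) (T.irrefl _)
      · exact h
  · refine ⟨⟨u, ?_, c1⟩, ⟨w, ?_, c2⟩⟩
    · rcases hmem u (by simp) with h | h
      · exact absurd (h ▸ c1 : T.arc u u) (T.irrefl _)
      · exact h
    · rcases hmem w (by simp) with h | h
      · exact absurd (h ▸ c2 : T.arc w w) (T.irrefl _)
      · exact h
  · refine ⟨⟨v, ?_, c2⟩, ⟨u, ?_, c3⟩⟩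
    · rcases hmem v (by simp) with h | h
      · exact absurd (h ▸ c2 : T.arc v v) (T.irrefl _)
      · exact h
    · rcases hmem u (by simp) with h | h
      · exact absurd (h ▸ c3 : T.arc u u) (T.irrefl _)
      · exact h

lemma cycle_same_side (T' : Tournament V) {A' B' : Set V} {u v w : V}
    (hkey : ∀ p ∈ A', ∀ q ∈ B', ¬ T'.arc p q)
    (hu : u ∈ A' ∪ B') (hv : v ∈ A' ∪ B') (hw : w ∈ A' ∪ B')
    (c1 : T'.arc u v) (c2 : T'.arc v w) (c3 : T'.arc w u) :
    (u ∈ A' ∧ v ∈ A' ∧ w ∈ A') ∨ (u ∈ B' ∧ v ∈ B' ∧ w ∈ B') := by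
  rcases hu with hu | hu <;> rcases hv with hv | hv <;> rcases hw with hw | hw
  · exact Or.inl ⟨hu, hv, hw⟩
  · exact absurd c2 (hkey v hv w hw)
  · exact absurd c1 (hkey u hu v hv)
  · exact absurd c1 (hkey u hu v hv)
  · exact absurd c3 (hkey w hw u hu)
  · exact absurd c2 (hkey v hv w hw)
  · exact absurd c3 (hkey w hw u hu)
  · exact Or.inr ⟨hu, hv, hw⟩

/-- (α) : if `T` and `T'` have the same 3-cycles, `I` is an interval of `T` and
`T[I]` is indecomposable with `|I| ≥ 3`, then `I` is an interval of `T'`. -/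
lemma isInterval_transfer [Finite V] {T T' : Tournament V} {I : Set V}
    (hI : T.IsInterval I) (hind : (T.restrict I).Indecomposable) (hs : 3 ≤ I.ncard)
    (h12 : SameC3 T T') (h21 : SameC3 T' T) : T'.IsInterval I := by
  intro x hx
  classical
  set S : Tournament ↥I := T.restrict I with hS
  have hcard : 3 ≤ Nat.card ↥I := by
    rw [Nat.card_coe_set_eq]; exact hs
  set A : Set ↥I := {y | T'.arc x ↑y} with hA
  set B : Set ↥I := {y | T'.arc ↑y x} with hB
  have hxy : ∀ y : ↥I, x ≠ ↑y := fun y h => hx (h ▸ y.2)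
  have hcover : A ∪ B = Set.univ := by
    ext y
    simp only [Set.mem_union, Set.mem_setOf_eq, Set.mem_univ, iff_true, hA, hB]
    exact T'.arc_total (hxy y)
  have hdisAB : Disjoint A B := by
    rw [Set.disjoint_left]
    intro y h1 h2
    exact T'.arc_asymm h1 h2
  by_cases hAe : A = ∅
  · right
    intro y hy
    have hyA : (⟨y, hy⟩ : ↥I) ∉ A := by rw [hAe]; exact Set.notMem_empty _
    exact T'.not_arc (hxy ⟨y, hy⟩) hyA
  by_cases hBe : B = ∅
  · left
    intro y hy
    have hyB : (⟨y, hy⟩ : ↥I) ∉ B := by rw [hBe]; exact Set.notMem_empty _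
    exact T'.not_arc (fun h => (hxy ⟨y, hy⟩) h.symm) hyB
  exfalso
  have hAne : A.Nonempty := Set.nonempty_iff_ne_empty.mpr hAe
  have hBne : B.Nonempty := Set.nonempty_iff_ne_empty.mpr hBe
  -- key : all T'-arcs between A and B go from B to A
  have key : ∀ y ∈ A, ∀ z ∈ B, T'.arc ↑z ↑y := by
    intro y hy z hz
    have hyz : (y : V) ≠ (z : V) := by
      intro h
      have : y = z := Subtype.ext h
      exact (Set.disjoint_left.mp hdisAB) hy (this ▸ hz)
    by_contra hzy
    have h2 : T'.arc ↑y ↑z := T'.not_arc (fun h => hyz h.symm) hzy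
    obtain ⟨u, v, w, hset, c1, c2, c3⟩ := h21 x ↑y ↑z hy h2 hz
    obtain ⟨⟨t, ht, harc⟩, ⟨t', ht', harc'⟩⟩ := cycle_inout T hset c1 c2 c3
    have htI : t ∈ I := by rcases ht with rfl | rfl; exact y.2; exact z.2
    have ht'I : t' ∈ I := by rcases ht' with rfl | rfl; exact y.2; exact z.2
    rcases hI x hx with hdom | hsubm
    · exact T.arc_asymm (hdom t htI) harc
    · exact T.arc_asymm (hsubm t' ht'I) harc'
  have key2 : ∀ p ∈ Subtype.val '' A, ∀ q ∈ Subtype.val '' B, ¬ T'.arc p q := by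
    rintro p ⟨y, hy, rfl⟩ q ⟨z, hz, rfl⟩ h
    exact T'.arc_asymm h (key y hy z hz)
  -- no S-cycle straddles A, B
  have Hs : ∀ a b c : ↥I, S.arc a b → S.arc b c → S.arc c a →
      ((a ∈ A ∧ b ∈ A ∧ c ∈ A) ∨ (a ∈ B ∧ b ∈ B ∧ c ∈ B)) := by
    intro a b c h1 h2 h3
    obtain ⟨u, v, w, hset, c1, c2, c3⟩ := h12 ↑a ↑b ↑c h1 h2 h3
    have hval : ∀ t, t ∈ ({u, v, w} : Set V) → t ∈ Subtype.val '' A ∪ Subtype.val '' B := by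
      intro t ht
      rw [hset] at ht
      simp only [Set.mem_insert_iff, Set.mem_singleton_iff] at ht
      have htI : ∃ r : ↥I, (↑r : V) = t := by
        rcases ht with rfl | rfl | rfl
        exacts [⟨a, rfl⟩, ⟨b, rfl⟩, ⟨c, rfl⟩]
      obtain ⟨r, rfl⟩ := htI
      have : r ∈ A ∪ B := hcover ▸ Set.mem_univ r
      rcases this with h | h
      · exact Or.inl ⟨r, h, rfl⟩
      · exact Or.inr ⟨r, h, rfl⟩
    have hside := cycle_same_side T' key2 (hval u (by simp)) (hval v (by simp))
      (hval w (by simp)) c1 c2 c3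
    have hmem : ∀ r : ↥I, (↑r : V) ∈ ({u, v, w} : Set V) →
        ((↑r : V) ∈ Subtype.val '' A → r ∈ A) ∧ ((↑r : V) ∈ Subtype.val '' B → r ∈ B) := by
      intro r _
      constructor
      · rintro ⟨r', hr', hrr⟩
        rwa [show r' = r from Subtype.ext hrr] at hr'
      · rintro ⟨r', hr', hrr⟩
        rwa [show r' = r from Subtype.ext hrr] at hr'
    have hmemhouseholds : ∀ r : ↥I, (↑r : V) ∈ ({u, v, w} : Set V) → (r ∈ A ∨ r ∈ B) := by
      intro r hr
      have := hval ↑r hr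
      rcases this with h | h
      · exact Or.inl ((hmem r hr).1 h)
      · exact Or.inr ((hmem r hr).2 h)
    have haIn : (↑a : V) ∈ ({u, v, w} : Set V) := by rw [hset]; simp
    have hbIn : (↑b : V) ∈ ({u, v, w} : Set V) := by rw [hset]; simp
    have hcIn : (↑c : V) ∈ ({u, v, w} : Set V) := by rw [hset]; simp
    rcases hside with ⟨huA, hvA, hwA⟩ | ⟨huB, hvB, hwB⟩
    · left
      have hall : ∀ t, t ∈ ({u, v, w} : Set V) → t ∈ Subtype.val '' A := by
        intro t ht
        simp only [Set.mem_insert_iff, Set.mem_singleton_iff] at ht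
        rcases ht with rfl | rfl | rfl
        exacts [huA, hvA, hwA]
      exact ⟨(hmem a haIn).1 (hall _ haIn), (hmem b hbIn).1 (hall _ hbIn),
        (hmem c hcIn).1 (hall _ hcIn)⟩
    · right
      have hall : ∀ t, t ∈ ({u, v, w} : Set V) → t ∈ Subtype.val '' B := by
        intro t ht
        simp only [Set.mem_insert_iff, Set.mem_singleton_iff] at ht
        rcases ht with rfl | rfl | rfl
        exacts [huB, hvB, hwB]
      exact ⟨(hmem a haIn).2 (hall _ haIn), (hmem b hbIn).2 (hall _ hbIn),
        (hmem c hcIn).2 (hall _ hcIn)⟩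
  exact no_straddle hind hcard A.ncard A B rfl hcover hdisAB hAne hBne Hs

end Cycles

section Arith

lemma choose2 (n : ℕ) : 2 * (n + 1).choose 2 = (n + 1) * n := by
  induction n with
  | zero => simp
  | succ m ih =>
    rw [Nat.choose_succ_succ (m + 1) 1, Nat.mul_add, ih, Nat.choose_one_right]
    ring

lemma elim3 {q a b c a' b' c' : ℕ}
    (h0 : a + b + c = a' + b' + c')
    (h1 : a * (q + 2) + b * (q + 1) = a' * (q + 2) + b' * (q + 1))
    (h2 : a * Nat.choose (q + 2) 2 + b * Nat.choose (q + 1) 2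
        = a' * Nat.choose (q + 2) 2 + b' * Nat.choose (q + 1) 2) :
    a = a' ∧ b = b' ∧ c = c' := by
  have c2a : 2 * (q + 2).choose 2 = (q + 2) * (q + 1) := choose2 (q + 1)
  have c2b : 2 * (q + 1).choose 2 = (q + 1) * q := choose2 q
  have E2 : a * ((q + 2) * (q + 1)) + b * ((q + 1) * q)
      = a' * ((q + 2) * (q + 1)) + b' * ((q + 1) * q) := by
    have := congrArg (2 * ·) h2
    calc a * ((q + 2) * (q + 1)) + b * ((q + 1) * q)
        = a * (2 * (q + 2).choose 2) + b * (2 * (q + 1).choose 2) := by rw [c2a, c2b]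
      _ = 2 * (a * Nat.choose (q + 2) 2 + b * Nat.choose (q + 1) 2) := by ring
      _ = 2 * (a' * Nat.choose (q + 2) 2 + b' * Nat.choose (q + 1) 2) := this
      _ = a' * (2 * (q + 2).choose 2) + b' * (2 * (q + 1).choose 2) := by ring
      _ = a' * ((q + 2) * (q + 1)) + b' * ((q + 1) * q) := by rw [c2a, c2b]
  have E3 : (q + 1) * (a * (q + 2) + b * (q + 1))
      = (a * ((q + 2) * (q + 1)) + b * ((q + 1) * q)) + b * (q + 1) := by ring
  have E3' : (q + 1) * (a' * (q + 2) + b' * (q + 1))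
      = (a' * ((q + 2) * (q + 1)) + b' * ((q + 1) * q)) + b' * (q + 1) := by ring
  have hb : b * (q + 1) = b' * (q + 1) := by
    have := congrArg ((q + 1) * ·) h1
    rw [E3, E3'] at this
    omega
  have hbb : b = b' := Nat.eq_of_mul_eq_mul_right (by omega) hb
  have haa : a = a' := by
    subst hbb
    have : a * (q + 2) = a' * (q + 2) := by omega
    exact Nat.eq_of_mul_eq_mul_right (by omega) this
  subst hbb haa
  exact ⟨rfl, rfl, by omega⟩

end Arith

section Classify

open scoped Classical

variable {V : Type*} [Fintype V] [DecidableEq V]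

lemma sum_classify (s : Finset (Finset V)) (g : Finset V → ℕ) (F : ℕ → ℕ) (M : Finset ℕ)
    (hg : ∀ W ∈ s, g W ∈ M) :
    ∑ W ∈ s, F (g W) = ∑ m ∈ M, ((s.filter (fun W => g W = m)).card) * F m := by
  calc ∑ W ∈ s, F (g W)
      = ∑ W ∈ s, ∑ m ∈ M, (if g W = m then F m else 0) := by
        refine Finset.sum_congr rfl fun W hW => ?_
        rw [Finset.sum_ite_eq M (g W) F]
        rw [if_pos (hg W hW)]
    _ = ∑ m ∈ M, ∑ W ∈ s, (if g W = m then F m else 0) := Finset.sum_comm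
    _ = ∑ m ∈ M, ((s.filter (fun W => g W = m)).card) * F m := by
        refine Finset.sum_congr rfl fun m _ => ?_
        rw [← Finset.sum_filter, Finset.sum_const, smul_eq_mul]

end Classify

section C3Bridge

open scoped Classical

variable {V : Type*} [Fintype V] [DecidableEq V]

lemma c3_arc01 : C3Tour.arc 0 1 := Or.inl ⟨rfl, rfl⟩
lemma c3_arc12 : C3Tour.arc 1 2 := Or.inr (Or.inl ⟨rfl, rfl⟩)
lemma c3_arc20 : C3Tour.arc 2 0 := Or.inr (Or.inr ⟨rfl, rfl⟩)
lemma c3_not (i j : Fin 3)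
    (h : ¬ ((i = 0 ∧ j = 1) ∨ (i = 1 ∧ j = 2) ∨ (i = 2 ∧ j = 0))) : ¬ C3Tour.arc i j := h

lemma isCopy_c3 {T : Tournament V} {x y z : V}
    (h1 : T.arc x y) (h2 : T.arc y z) (h3 : T.arc z x) :
    IsCopy T C3Tour ({x, y, z} : Finset V) := by
  have hxy : x ≠ y := T.arc_ne h1
  have hyz : y ≠ z := T.arc_ne h2
  have hzx : z ≠ x := T.arc_ne h3
  refine ⟨![x, y, z], ?_, ?_, ?_⟩
  · intro i j hij
    fin_cases i <;> fin_cases j <;>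
      simp only [Matrix.cons_val_zero, Matrix.cons_val_one, Matrix.head_cons,
        Matrix.cons_val_two, Matrix.tail_cons] at hij <;>
      first
        | rfl
        | exact absurd hij hxy
        | exact absurd hij hyz
        | exact absurd hij hzx
        | exact absurd hij.symm hxy
        | exact absurd hij.symm hyz
        | exact absurd hij.symm hzx
  · intro i j
    fin_cases i <;> fin_cases j
    · exact iff_of_false (c3_not _ _ (by decide)) (T.irrefl x)
    · exact iff_of_true c3_arc01 h1
    · exact iff_of_false (c3_not _ _ (by decide)) (T.arc_asymm h3)
    · exact iff_of_false (c3_not _ _ (by decide)) (T.arc_asymm h1)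
    · exact iff_of_false (c3_not _ _ (by decide)) (T.irrefl y)
    · exact iff_of_true c3_arc12 h2
    · exact iff_of_true c3_arc20 h3
    · exact iff_of_false (c3_not _ _ (by decide)) (T.arc_asymm h2)
    · exact iff_of_false (c3_not _ _ (by decide)) (T.irrefl z)
  · ext v
    simp only [Finset.mem_image, Finset.mem_univ, true_and, Finset.mem_insert,
      Finset.mem_singleton]
    constructor
    · rintro ⟨i, rfl⟩
      fin_cases i <;> simp
    · rintro (rfl | rfl | rfl)
      · exact ⟨0, rfl⟩
      · exact ⟨1, rfl⟩
      · exact ⟨2, rfl⟩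

lemma c3_cycle_of_isCopy {T : Tournament V} {Y : Finset V} (h : IsCopy T C3Tour Y) :
    ∃ u v w, ({u, v, w} : Set V) = ↑Y ∧ T.arc u v ∧ T.arc v w ∧ T.arc w u := by
  obtain ⟨g, hinj, harc, him⟩ := h
  refine ⟨g 0, g 1, g 2, ?_, (harc 0 1).mp c3_arc01, (harc 1 2).mp c3_arc12,
    (harc 2 0).mp c3_arc20⟩
  rw [← him]
  ext v
  simp only [Set.mem_insert_iff, Set.mem_singleton_iff, Finset.coe_image, Finset.coe_univ,
    Set.image_univ, Set.mem_range]
  constructor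
  · rintro (rfl | rfl | rfl)
    · exact ⟨0, rfl⟩
    · exact ⟨1, rfl⟩
    · exact ⟨2, rfl⟩
  · rintro ⟨i, rfl⟩
    fin_cases i
    · exact Or.inl rfl
    · exact Or.inr (Or.inl rfl)
    · exact Or.inr (Or.inr rfl)

lemma card3 {T : Tournament V} {x y z : V}
    (h1 : T.arc x y) (h2 : T.arc y z) (h3 : T.arc z x) :
    ({x, y, z} : Finset V).card = 3 := by
  have hxy : x ≠ y := T.arc_ne h1
  have hyz : y ≠ z := T.arc_ne h2
  have hzx : z ≠ x := T.arc_ne h3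
  rw [Finset.card_insert_of_notMem (by simp [hxy, Ne.symm hzx]),
    Finset.card_insert_of_notMem (by simp [hyz]), Finset.card_singleton]

/-- Same 3-cycles, from per-3-set isomorphisms. -/
lemma sameC3_of_isoRestr {T T' : Tournament V}
    (h : ∀ Y : Set V, Y.ncard = 3 → (T.restrict Y).Iso (T'.restrict Y)) :
    SameC3 T T' := by
  intro x y z h1 h2 h3
  set Y : Finset V := {x, y, z} with hYdef
  have hiso := h ↑Y (by rw [Set.ncard_coe_finset, card3 h1 h2 h3])
  have hc : IsCopy T C3Tour Y := isCopy_c3 h1 h2 h3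
  have hc' : IsCopy T' C3Tour Y :=
    isCopy_of_iso (iso_trans (iso_symm hiso) (iso_of_isCopy hc))
  obtain ⟨u, v, w, hset, c1, c2, c3⟩ := c3_cycle_of_isCopy hc'
  refine ⟨u, v, w, ?_, c1, c2, c3⟩
  rw [hset, hYdef]
  simp

/-- The class of copies fully covering `IF`. -/
lemma classS_eq {γ : Type*} [Fintype γ] {T : Tournament V} {Q : Tournament γ}
    {IF : Finset V} (hIFcard : IF.card = Fintype.card γ) :
    ((copiesF T Q Finset.univ).filter (fun W => (IF \ W).card = 0))
    = if IsCopy T Q IF then {IF} else ∅ := by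
  ext W
  rw [Finset.mem_filter, mem_copiesF]
  constructor
  · rintro ⟨⟨⟨-, hWcard⟩, hcopy⟩, hW0⟩
    have hsub : IF ⊆ W := by
      rw [← Finset.sdiff_eq_empty_iff_subset]
      exact Finset.card_eq_zero.mp hW0
    have hWeq : W = IF := by
      symm
      apply Finset.eq_of_subset_of_card_le hsub
      rw [hWcard, hIFcard]
    subst hWeq
    rw [if_pos hcopy]
    exact Finset.mem_singleton_self W
  · intro hW
    by_cases hcopy : IsCopy T Q IF
    · rw [if_pos hcopy, Finset.mem_singleton] at hW
      subst hW
      exact ⟨⟨⟨Finset.subset_univ _, hIFcard⟩, hcopy⟩, by simp⟩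
    · rw [if_neg hcopy] at hW
      exact absurd hW (Finset.notMem_empty W)

/-- Same 3-cycles, from deletion isomorphisms (used for `{-3}`-hypomorphy). -/
lemma sameC3_of_count {T T' : Tournament V}
    (hiso : ∀ X : Finset V, X.card = 3 →
      (T.restrict ↑(Finset.univ \ X)).Iso (T'.restrict ↑(Finset.univ \ X)))
    (hn : 6 ≤ Fintype.card V) : SameC3 T T' := by
  intro x y z h1 h2 h3
  set Y : Finset V := {x, y, z} with hYdef
  have hYcard : Y.card = 3 := card3 h1 h2 h3
  have hk : Fintype.card (Fin 3) + 3 ≤ Fintype.card V := by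
    rw [Fintype.card_fin]; omega
  have husum : ∀ ℓ, ℓ ≤ 3 →
      ∑ W ∈ copiesF T C3Tour Finset.univ, ((Y \ W).card.choose ℓ)
      = ∑ W ∈ copiesF T' C3Tour Finset.univ, ((Y \ W).card.choose ℓ) :=
    fun ℓ hℓ => u_eq C3Tour Y 3 hiso hk ℓ hℓ
  have hclass : ∀ (R : Tournament V), ∀ W ∈ copiesF R C3Tour Finset.univ,
      (Y \ W).card ∈ Finset.range 4 := by
    intro R W _
    rw [Finset.mem_range]
    have : (Y \ W).card ≤ Y.card := Finset.card_le_card (Finset.sdiff_subset)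
    omega
  set qT : ℕ → ℕ := fun m =>
    ((copiesF T C3Tour Finset.univ).filter (fun W => (Y \ W).card = m)).card with hqT
  set qT' : ℕ → ℕ := fun m =>
    ((copiesF T' C3Tour Finset.univ).filter (fun W => (Y \ W).card = m)).card with hqT'
  have hdecT : ∀ ℓ, ∑ W ∈ copiesF T C3Tour Finset.univ, ((Y \ W).card.choose ℓ)
      = ∑ m ∈ Finset.range 4, qT m * m.choose ℓ :=
    fun ℓ => sum_classify _ _ (fun m => m.choose ℓ) _ (hclass T)
  have hdecT' : ∀ ℓ, ∑ W ∈ copiesF T' C3Tour Finset.univ, ((Y \ W).card.choose ℓ)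
      = ∑ m ∈ Finset.range 4, qT' m * m.choose ℓ :=
    fun ℓ => sum_classify _ _ (fun m => m.choose ℓ) _ (hclass T')
  have heq : ∀ ℓ, ℓ ≤ 3 → ∑ m ∈ Finset.range 4, qT m * m.choose ℓ
      = ∑ m ∈ Finset.range 4, qT' m * m.choose ℓ := by
    intro ℓ hℓ
    rw [← hdecT, ← hdecT', husum ℓ hℓ]
  have e0 := heq 0 (by omega)
  have e1 := heq 1 (by omega)
  have e2 := heq 2 (by omega)
  have e3 := heq 3 (by omega)
  simp only [Finset.sum_range_succ, Finset.sum_range_zero, Nat.choose_zero_right,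
    Nat.choose_one_right, Nat.choose_self, mul_one,
    show (0:ℕ).choose 2 = 0 from rfl, show (1:ℕ).choose 2 = 0 from rfl,
    show (2:ℕ).choose 2 = 1 from rfl, show (3:ℕ).choose 2 = 3 from rfl,
    show (0:ℕ).choose 3 = 0 from rfl, show (1:ℕ).choose 3 = 0 from rfl,
    show (2:ℕ).choose 3 = 0 from rfl, mul_zero, zero_add, add_zero, mul_one] at e0 e1 e2 e3
  have hq0 : qT 0 = qT' 0 := by omega
  have hcT : IsCopy T C3Tour Y := isCopy_c3 h1 h2 h3
  have hYcard3 : Y.card = Fintype.card (Fin 3) := by rw [Fintype.card_fin]; exact hYcard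
  have hqT0 : qT 0 = 1 := by
    rw [hqT]
    simp only
    rw [classS_eq hYcard3, if_pos hcT, Finset.card_singleton]
  have hcT' : IsCopy T' C3Tour Y := by
    by_contra hcon
    have : qT' 0 = 0 := by
      rw [hqT']
      simp only
      rw [classS_eq hYcard3, if_neg hcon, Finset.card_empty]
    omega
  obtain ⟨u, v, w, hset, c1, c2, c3⟩ := c3_cycle_of_isCopy hcT'
  refine ⟨u, v, w, ?_, c1, c2, c3⟩
  rw [hset, hYdef]
  simp

end C3Bridge

section Trichotomy

open scoped Classical

variable {V : Type*} [Fintype V] [DecidableEq V]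

lemma copy_classes_indec {β : Type*} [Fintype β] {T : Tournament V}
    {P : Tournament β} (hP : P.Indecomposable) {I : Set V} (hI : T.IsInterval I)
    {W : Finset V} (hc : IsCopy T P W) {IF : Finset V} (hIF : ↑IF = I) :
    (W ∩ IF).card = 0 ∨ (W ∩ IF).card = 1 ∨ (W ∩ IF).card = Fintype.card β := by
  obtain ⟨g, hinj, harc, him⟩ := hc
  set J : Set β := g ⁻¹' I with hJ
  have hJint : P.IsInterval J := by
    intro i hi
    rcases hI (g i) hi with h | h
    · exact Or.inl (fun j hj => (harc i j).mpr (h (g j) hj))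
    · exact Or.inr (fun j hj => (harc j i).mpr (h (g j) hj))
  have himg : (↑(W ∩ IF) : Set V) = g '' J := by
    rw [Finset.coe_inter, hIF, ← him, Finset.coe_image, Finset.coe_univ, Set.image_univ,
      hJ, Set.image_preimage_eq_inter_range, Set.inter_comm]
  have hcard : (W ∩ IF).card = J.ncard := by
    rw [← Set.ncard_coe_finset, himg, Set.ncard_image_of_injective J hinj]
  rcases indec_interval_ncard hP hJint with h | h | h
  · left; omega
  · right; left; omega
  · right; right
    rw [hcard, h, Set.ncard_univ, Nat.card_eq_fintype_card]

lemma copy_classes_sink {γ : Type*} [Fintype γ] {Q : Tournament γ}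
    (hQ : Q.Indecomposable) (h3 : 3 ≤ Fintype.card γ) {T : Tournament V} {I : Set V}
    (hI : T.IsInterval I) {W : Finset V} (hc : IsCopy T (sinkExt Q) W)
    {IF : Finset V} (hIF : ↑IF = I) (hIFcard : IF.card = Fintype.card γ) :
    (IF \ W).card = IF.card ∨ (IF \ W).card = IF.card - 1 ∨
      ((IF \ W).card = 0 ∧ ∃ w, w ∈ Iplus T I ∧ W = insert w IF) := by
  obtain ⟨g, hinj, harc, him⟩ := hc
  set J : Set (Option γ) := g ⁻¹' I with hJ
  have hJint : (sinkExt Q).IsInterval J := by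
    intro i hi
    rcases hI (g i) hi with h | h
    · exact Or.inl (fun j hj => (harc i j).mpr (h (g j) hj))
    · exact Or.inr (fun j hj => (harc j i).mpr (h (g j) hj))
  have himg : (↑(W ∩ IF) : Set V) = g '' J := by
    rw [Finset.coe_inter, hIF, ← him, Finset.coe_image, Finset.coe_univ, Set.image_univ,
      hJ, Set.image_preimage_eq_inter_range, Set.inter_comm]
  have hcard : (W ∩ IF).card = J.ncard := by
    rw [← Set.ncard_coe_finset, himg, Set.ncard_image_of_injective J hinj]
  have hsd : (IF \ W).card + (W ∩ IF).card = IF.card := by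
    have h' := Finset.card_inter_add_card_sdiff IF W
    rw [Finset.inter_comm] at h'
    omega
  rcases sinkExt_interval hQ h3 hJint with h | h | h | h
  · left; omega
  · right; left; omega
  · -- J = Set.range some
    right; right
    have hJcard : J.ncard = Fintype.card γ := by
      rw [h, ← Set.image_univ, Set.ncard_image_of_injective _ (Option.some_injective γ),
        Set.ncard_univ, Nat.card_eq_fintype_card]
    refine ⟨by omega, ?_⟩
    set w := g none with hw
    have hwI : w ∉ I := by
      intro hmem
      have hnJ : (none : Option γ) ∈ J := hmem
      rw [h] at hnJ
      obtain ⟨a, ha⟩ := hnJ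
      exact Option.some_ne_none a ha
    have hdom : ∀ a : γ, T.arc (g (some a)) w := by
      intro a
      exact (harc (some a) none).mp trivial
    have hwplus : w ∈ Iplus T I := by
      refine ⟨hwI, ?_⟩
      intro y hy
      rcases hI w hwI with hcase | hcase
      · exfalso
        obtain ⟨a⟩ : Nonempty γ := Fintype.card_pos_iff.mp (by omega)
        have hga : g (some a) ∈ I := by
          have : (some a : Option γ) ∈ J := by rw [h]; exact ⟨a, rfl⟩
          exact this
        exact T.arc_asymm (hdom a) (hcase _ hga)
      · exact hcase y hy
    refine ⟨w, hwplus, ?_⟩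
    have hIFW : IF ⊆ W := by
      have hsub : W ∩ IF ⊆ IF := Finset.inter_subset_right
      have : W ∩ IF = IF := Finset.eq_of_subset_of_card_le hsub (by omega)
      rw [← this]
      exact Finset.inter_subset_left
    have hwW : w ∈ W := by
      rw [← him]
      exact Finset.mem_image.mpr ⟨none, Finset.mem_univ _, rfl⟩
    have hwIF : w ∉ IF := fun hmem => hwI (hIF ▸ hmem)
    have hsub : insert w IF ⊆ W := Finset.insert_subset hwW hIFW
    have hcardW : W.card = Fintype.card γ + 1 := by
      rw [← him, Finset.card_image_of_injective _ hinj, Finset.card_univ,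
        Fintype.card_option]
    symm
    apply Finset.eq_of_subset_of_card_le hsub
    rw [hcardW, Finset.card_insert_of_notMem hwIF, hIFcard]
  · exfalso
    have hJc : J.ncard = Fintype.card γ + 1 := by
      rw [h, Set.ncard_univ, Nat.card_eq_fintype_card, Fintype.card_option]
    have hle : (W ∩ IF).card ≤ IF.card := Finset.card_le_card Finset.inter_subset_right
    omega

lemma sink_copy_mk {γ : Type*} [Fintype γ] {Q : Tournament γ} {T : Tournament V}
    {I : Set V} (hiso : (T.restrict I).Iso Q) {w : V} (hw : w ∈ Iplus T I)
    {IF : Finset V} (hIF : ↑IF = I) : IsCopy T (sinkExt Q) (insert w IF) := by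
  obtain ⟨e, he⟩ := hiso
  obtain ⟨hwI, hwdom⟩ := hw
  refine ⟨fun o => o.elim w (fun a => ↑(e.symm a)), ?_, ?_, ?_⟩
  · intro o₁ o₂ h
    cases o₁ with
    | none =>
      cases o₂ with
      | none => rfl
      | some a =>
        exfalso
        have h' : w = ↑(e.symm a) := h
        exact hwI (h' ▸ (e.symm a).2)
    | some a =>
      cases o₂ with
      | none =>
        exfalso
        have h' : (↑(e.symm a) : V) = w := h
        exact hwI (h' ▸ (e.symm a).2)
      | some b =>
        have h' : (↑(e.symm a) : V) = ↑(e.symm b) := h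
        have : e.symm a = e.symm b := Subtype.ext h'
        rw [e.symm.injective this]
  · intro i j
    cases i with
    | none =>
      cases j with
      | none => exact iff_of_false (fun h => h) (T.irrefl w)
      | some a =>
        exact iff_of_false (fun h => h) (T.arc_asymm (hwdom _ (e.symm a).2))
    | some a =>
      cases j with
      | none => exact iff_of_true trivial (hwdom _ (e.symm a).2)
      | some b =>
        have h' := he (e.symm a) (e.symm b)
        rw [e.apply_symm_apply, e.apply_symm_apply] at h'
        exact h'.symm
  · ext v
    simp only [Finset.mem_image, Finset.mem_univ, true_and, Finset.mem_insert]
    constructor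
    · rintro ⟨o, rfl⟩
      cases o with
      | none => exact Or.inl rfl
      | some a =>
        right
        show (↑(e.symm a) : V) ∈ IF
        have hmem2 : (↑(e.symm a) : V) ∈ (↑IF : Set V) := by
          rw [hIF]
          exact (e.symm a).2
        exact hmem2
    · rintro (rfl | hv)
      · exact ⟨none, rfl⟩
      · have hvI : v ∈ I := hIF ▸ hv
        refine ⟨some (e ⟨v, hvI⟩), ?_⟩
        simp

lemma classS_count {γ : Type*} [Fintype γ] {Q : Tournament γ}
    (hQ : Q.Indecomposable) (h3 : 3 ≤ Fintype.card γ) {T : Tournament V} {I : Set V}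
    (hI : T.IsInterval I) (hiso : (T.restrict I).Iso Q)
    {IF : Finset V} (hIF : ↑IF = I) (hIFcard : IF.card = Fintype.card γ) :
    ((copiesF T (sinkExt Q) Finset.univ).filter (fun W => (IF \ W).card = 0)).card
    = (Iplus T I).ncard := by
  have hfinP : (Iplus T I).Finite := Set.toFinite _
  rw [show (Iplus T I).ncard = hfinP.toFinset.card from Set.ncard_eq_toFinset_card _ hfinP]
  have hEx : ∀ W ∈ (copiesF T (sinkExt Q) Finset.univ).filter (fun W => (IF \ W).card = 0),
      ∃ w, w ∈ Iplus T I ∧ W = insert w IF := by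
    intro W hW
    rw [Finset.mem_filter] at hW
    obtain ⟨hWc, hW0⟩ := hW
    have hcopy := (mem_copiesF.mp hWc).2
    rcases copy_classes_sink hQ h3 hI hcopy hIF hIFcard with h | h | ⟨-, hex⟩
    · exfalso; omega
    · exfalso; omega
    · exact hex
  refine Finset.card_bij (fun W hW => Classical.choose (hEx W hW)) ?_ ?_ ?_
  · intro W hW
    rw [Set.Finite.mem_toFinset]
    exact (Classical.choose_spec (hEx W hW)).1
  · intro W₁ h₁ W₂ h₂ heq
    have s₁ := (Classical.choose_spec (hEx W₁ h₁)).2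
    have s₂ := (Classical.choose_spec (hEx W₂ h₂)).2
    have heq' : Classical.choose (hEx W₁ h₁) = Classical.choose (hEx W₂ h₂) := heq
    rw [s₁, s₂, heq']
  · intro w hw
    rw [Set.Finite.mem_toFinset] at hw
    have hwIF : w ∉ IF := fun hmem => hw.1 (hIF ▸ hmem)
    have hmem : insert w IF ∈
        (copiesF T (sinkExt Q) Finset.univ).filter (fun W => (IF \ W).card = 0) := by
      rw [Finset.mem_filter, mem_copiesF]
      refine ⟨⟨⟨Finset.subset_univ _, ?_⟩, sink_copy_mk hiso hw hIF⟩, ?_⟩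
      · rw [Finset.card_insert_of_notMem hwIF, hIFcard, Fintype.card_option]
      · rw [Finset.card_eq_zero, Finset.sdiff_eq_empty_iff_subset]
        exact Finset.subset_insert w IF
    refine ⟨insert w IF, hmem, ?_⟩
    obtain ⟨hch1, hch2⟩ := Classical.choose_spec (hEx (insert w IF) hmem)
    have hcc : Classical.choose (hEx (insert w IF) hmem) ∈ insert w IF :=
      (Finset.ext_iff.mp hch2 _).mpr (Finset.mem_insert_self _ _)
    rcases Finset.mem_insert.mp hcc with h | h
    · exact h
    · exact absurd (hIF ▸ h) hch1.1

end Trichotomy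

section Final

open scoped Classical

variable {V : Type*} [Fintype V] [DecidableEq V]

lemma iplus_add_iminus {T : Tournament V} {I : Set V}
    (hI : T.IsInterval I) (hne : I.Nonempty) :
    (Iplus T I).ncard + (Iminus T I).ncard = Iᶜ.ncard := by
  have hdisj : Disjoint (Iplus T I) (Iminus T I) := by
    rw [Set.disjoint_left]
    rintro x ⟨hx1, hx2⟩ ⟨-, hx4⟩
    obtain ⟨y, hy⟩ := hne
    exact T.arc_asymm (hx2 y hy) (hx4 y hy)
  have hcup : Iplus T I ∪ Iminus T I = Iᶜ := by
    ext x
    constructor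
    · rintro (⟨hx, -⟩ | ⟨hx, -⟩) <;> exact hx
    · intro hx
      rcases hI x hx with h | h
      · exact Or.inr ⟨hx, h⟩
      · exact Or.inl ⟨hx, h⟩
  rw [← hcup, Set.ncard_union_eq hdisj (Set.toFinite _) (Set.toFinite _)]

/-- The common counting step : the class of copies covering `IF` has the same
cardinality for `T` and `T'`. -/
lemma main_count {β : Type*} [Fintype β] {T T' : Tournament V}
    (P : Tournament β) {IF : Finset V} {d : ℕ}
    (hiso : ∀ X : Finset V, X.card = d →
      (T.restrict ↑(Finset.univ \ X)).Iso (T'.restrict ↑(Finset.univ \ X)))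
    (hk : Fintype.card β + d ≤ Fintype.card V) (hd2 : 2 ≤ d)
    {q2 : ℕ}
    (hclT : ∀ W ∈ copiesF T P Finset.univ,
      (IF \ W).card = 0 ∨ (IF \ W).card = q2 + 1 ∨ (IF \ W).card = q2 + 2)
    (hclT' : ∀ W ∈ copiesF T' P Finset.univ,
      (IF \ W).card = 0 ∨ (IF \ W).card = q2 + 1 ∨ (IF \ W).card = q2 + 2) :
    ((copiesF T P Finset.univ).filter (fun W => (IF \ W).card = 0)).card
    = ((copiesF T' P Finset.univ).filter (fun W => (IF \ W).card = 0)).card := by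
  set M : Finset ℕ := {0, q2 + 1, q2 + 2} with hM
  have h0M : (0 : ℕ) ∉ ({q2 + 1, q2 + 2} : Finset ℕ) := by simp
  have h1M : (q2 + 1) ∉ ({q2 + 2} : Finset ℕ) := by simp
  have hmemT : ∀ W ∈ copiesF T P Finset.univ, (IF \ W).card ∈ M := by
    intro W hW
    rcases hclT W hW with h | h | h <;> simp [hM, h]
  have hmemT' : ∀ W ∈ copiesF T' P Finset.univ, (IF \ W).card ∈ M := by
    intro W hW
    rcases hclT' W hW with h | h | h <;> simp [hM, h]
  have hu : ∀ ℓ, ℓ ≤ 2 →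
      ∑ W ∈ copiesF T P Finset.univ, ((IF \ W).card.choose ℓ)
      = ∑ W ∈ copiesF T' P Finset.univ, ((IF \ W).card.choose ℓ) :=
    fun ℓ hℓ => u_eq P IF d hiso hk ℓ (by omega)
  set c : ℕ := ((copiesF T P Finset.univ).filter (fun W => (IF \ W).card = 0)).card with hc
  set b : ℕ := ((copiesF T P Finset.univ).filter (fun W => (IF \ W).card = q2 + 1)).card
    with hb
  set a : ℕ := ((copiesF T P Finset.univ).filter (fun W => (IF \ W).card = q2 + 2)).card
    with ha
  set c' : ℕ := ((copiesF T' P Finset.univ).filter (fun W => (IF \ W).card = 0)).card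
    with hc'
  set b' : ℕ := ((copiesF T' P Finset.univ).filter (fun W => (IF \ W).card = q2 + 1)).card
    with hb'
  set a' : ℕ := ((copiesF T' P Finset.univ).filter (fun W => (IF \ W).card = q2 + 2)).card
    with ha'
  have hdec : ∀ ℓ, ℓ ≤ 2 →
      c * (Nat.choose 0 ℓ) + (b * (Nat.choose (q2 + 1) ℓ) + a * (Nat.choose (q2 + 2) ℓ))
      = c' * (Nat.choose 0 ℓ) + (b' * (Nat.choose (q2 + 1) ℓ) + a' * (Nat.choose (q2 + 2) ℓ)) := by
    intro ℓ hℓ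
    have hT := sum_classify (copiesF T P Finset.univ) (fun W => (IF \ W).card)
      (fun m => m.choose ℓ) M hmemT
    have hT' := sum_classify (copiesF T' P Finset.univ) (fun W => (IF \ W).card)
      (fun m => m.choose ℓ) M hmemT'
    rw [hM, Finset.sum_insert h0M, Finset.sum_insert h1M, Finset.sum_singleton] at hT hT'
    rw [← hT, ← hT']
    exact hu ℓ hℓ
  have e0 := hdec 0 (by omega)
  have e1 := hdec 1 (by omega)
  have e2 := hdec 2 (by omega)
  rw [Nat.choose_zero_right, Nat.choose_zero_right, Nat.choose_zero_right] at e0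
  rw [Nat.choose_one_right, Nat.choose_one_right, Nat.choose_one_right] at e1
  rw [Nat.choose_eq_zero_of_lt (by omega : (0:ℕ) < 2)] at e2
  have h0 : a + b + c = a' + b' + c' := by omega
  have h1 : a * (q2 + 2) + b * (q2 + 1) = a' * (q2 + 2) + b' * (q2 + 1) := by
    simp only [Nat.mul_zero, Nat.zero_add, mul_zero] at e1
    linarith
  have h2 : a * Nat.choose (q2 + 2) 2 + b * Nat.choose (q2 + 1) 2
      = a' * Nat.choose (q2 + 2) 2 + b' * Nat.choose (q2 + 1) 2 := by
    simp only [Nat.mul_zero, Nat.zero_add, mul_zero] at e2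
    linarith
  exact (elim3 h0 h1 h2).2.2

end Final


end Tournament

open Tournament

/-- Let `T`, `T'` be tournaments on `V` with `|V| ≥ 6` and `I` an
interval of `T` with `|I| ≥ 3` such that `T[I]` is indecomposable. If `T` and
`T'` are `{3}`- and `{-2}`-hypomorphic and `|V∖I| ≥ 3`, then
`|I⁺_T| = |I⁺_{T'}|` and `|I⁻_T| = |I⁻_{T'}|`; likewise if `T` and `T'` are
`{-3}`-hypomorphic and `|V∖I| ≥ 4`. -/
theorem stmt7 {V : Type*} [Fintype V] (T T' : Tournament V)
    (hcard : 6 ≤ Fintype.card V) (I : Set V) (hI : T.IsInterval I)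
    (hI3 : 3 ≤ I.ncard) (hind : (T.restrict I).Indecomposable) :
    ((Tournament.Hypo T T' 3 ∧ Tournament.MinusHypo T T' 2 ∧ 3 ≤ Iᶜ.ncard) ∨
      (Tournament.MinusHypo T T' 3 ∧ 4 ≤ Iᶜ.ncard)) →
    (Tournament.Iplus T I).ncard = (Tournament.Iplus T' I).ncard ∧
      (Tournament.Iminus T I).ncard = (Tournament.Iminus T' I).ncard := by
  classical
  intro hyp
  letI : DecidableEq V := Classical.decEq V
  set n := Fintype.card V with hn
  have hcompl : I.ncard + Iᶜ.ncard = n := by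
    have h := Set.ncard_add_ncard_compl I
    rw [Nat.card_eq_fintype_card] at h
    exact h
  have hfinI : I.Finite := Set.toFinite I
  set IF : Finset V := hfinI.toFinset with hIFdef
  have hIF : (↑IF : Set V) = I := Set.Finite.coe_toFinset hfinI
  have hIFcard : IF.card = I.ncard := by rw [← Set.ncard_coe_finset, hIF]
  haveI : Fintype ↥I := hfinI.fintype
  have hcardI : Fintype.card ↥I = I.ncard := by
    rw [← Nat.card_eq_fintype_card, Nat.card_coe_set_eq]
  set S : Tournament ↥I := T.restrict I with hS
  -- uniform extraction of the hypotheses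
  obtain ⟨d, hd2, hiso, hsc, hsc', hkb⟩ :
      ∃ d, 2 ≤ d ∧ (∀ X : Finset V, X.card = d →
          (T.restrict ↑(Finset.univ \ X)).Iso (T'.restrict ↑(Finset.univ \ X))) ∧
        SameC3 T T' ∧ SameC3 T' T ∧ (I.ncard + 1 + d ≤ n) := by
    have hXcc : ∀ (X : Finset V) (d : ℕ), X.card = d →
        (↑(Finset.univ \ X) : Set V).ncard = n - d := by
      intro X d hX
      rw [Set.ncard_coe_finset, Finset.card_sdiff_of_subset (Finset.subset_univ X),
        Finset.card_univ, hX]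
    rcases hyp with ⟨h3, hm2, hc3⟩ | ⟨hm3, hc4⟩
    · exact ⟨2, by omega, fun X hX => hm2 _ (hXcc X 2 hX),
        sameC3_of_isoRestr (fun Y hY => h3 Y hY),
        sameC3_of_isoRestr (fun Y hY => iso_symm (h3 Y hY)), by omega⟩
    · exact ⟨3, by omega, fun X hX => hm3 _ (hXcc X 3 hX),
        sameC3_of_count (fun X hX => hm3 _ (hXcc X 3 hX)) hcard,
        sameC3_of_count (fun X hX => iso_symm (hm3 _ (hXcc X 3 hX))) hcard, by omega⟩
  -- `I` is an interval of `T'` as well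
  have hI' : T'.IsInterval I := isInterval_transfer hI hind hI3 hsc hsc'
  have hIFγ : IF.card = Fintype.card ↥I := by rw [hIFcard, hcardI]
  obtain ⟨q2, hq2⟩ : ∃ q2, I.ncard = q2 + 2 := ⟨I.ncard - 2, by omega⟩
  -- STEP I : T'[I] ≅ T[I]
  have hkS : Fintype.card ↥I + d ≤ n := by omega
  have hclS : ∀ (R : Tournament V), R.IsInterval I → ∀ W ∈ copiesF R S Finset.univ,
      (IF \ W).card = 0 ∨ (IF \ W).card = q2 + 1 ∨ (IF \ W).card = q2 + 2 := by
    intro R hRI W hW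
    have hc := (mem_copiesF.mp hW).2
    have hsd : (IF \ W).card + (W ∩ IF).card = IF.card := by
      have h' := Finset.card_inter_add_card_sdiff IF W
      rw [Finset.inter_comm] at h'
      omega
    rcases copy_classes_indec hind hRI hc hIF with h | h | h
    · right; right; omega
    · right; left; omega
    · left; omega
  have hstep1 := main_count S hiso hkS hd2 (hclS T hI) (hclS T' hI')
  have hcopyT : IsCopy T S IF := by
    apply isCopy_of_iso
    rw [hIF, hS]
    exact iso_refl _
  rw [classS_eq hIFγ, classS_eq hIFγ, if_pos hcopyT, Finset.card_singleton] at hstep1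
  have hcopyT' : IsCopy T' S IF := by
    by_contra hcon
    rw [if_neg hcon, Finset.card_empty] at hstep1
    omega
  have hiso' : (T'.restrict I).Iso S := by
    have h := iso_of_isCopy hcopyT'
    rwa [hIF] at h
  -- STEP II : counting sink extensions
  have h3γ : 3 ≤ Fintype.card ↥I := by omega
  have hkSP : Fintype.card (Option ↥I) + d ≤ n := by
    rw [Fintype.card_option]
    omega
  have hclSP : ∀ (R : Tournament V), R.IsInterval I → ∀ W ∈ copiesF R (sinkExt S) Finset.univ,
      (IF \ W).card = 0 ∨ (IF \ W).card = q2 + 1 ∨ (IF \ W).card = q2 + 2 := by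
    intro R hRI W hW
    have hc := (mem_copiesF.mp hW).2
    rcases copy_classes_sink hind h3γ hRI hc hIF hIFγ with h | h | ⟨h, -⟩
    · right; right; omega
    · right; left; omega
    · left; exact h
  have hstep2 := main_count (sinkExt S) hiso hkSP hd2 (hclSP T hI) (hclSP T' hI')
  have hisoT : (T.restrict I).Iso S := by
    rw [hS]
    exact iso_refl _
  rw [classS_count hind h3γ hI hisoT hIF hIFγ,
    classS_count hind h3γ hI' hiso' hIF hIFγ] at hstep2
  refine ⟨hstep2, ?_⟩
  have hne : I.Nonempty := Set.nonempty_of_ncard_ne_zero (by omega)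
  have hp1 := iplus_add_iminus hI hne
  have hp2 := iplus_add_iminus hI' hne
  omega
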